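/- arXiv:2408.08991 — 9 statements merged into one kernel-verified Lean document; each statement's English description precedes it below -/
import Mathlib

section
/- Let m ≥ 1 and let M be an m × m integer matrix with det M ≠ 0. Then the monomial map Φ_M : (ℂˣ)^m → (ℂˣ)^m defined by Φ_M(t)_j = ∏_{i=1}^m t_i^{M_{ij}} is a covering map (with respect to the product of the subspace topologies on ℂˣ ⊂ ℂ). -/
open Set Function

section CoveringLemma

variable {G H : Type*} [Group G] [Group H] [TopologicalSpace G] [TopologicalSpace H]
  [IsTopologicalGroup G] [IsTopologicalGroup H]

/-- A continuous surjective group homomorphism which agrees with some partial homeomorphism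
near `1` is a covering map. -/
theorem isCoveringMap_of_chart_at_one (φ : G →* H) (hc : Continuous φ)
    (e : OpenPartialHomeomorph G H) (h1 : (1 : G) ∈ e.source)
    (heq : Set.EqOn ⇑φ ⇑e e.source) (hs : Function.Surjective ⇑φ) :
    IsCoveringMap ⇑φ := by
  classical
  have h1t : (1 : H) ∈ e.target := by
    have h := e.map_source h1
    rwa [← heq h1, map_one] at h
  have hsymm : ∀ b ∈ e.target, φ (e.symm b) = b := fun b hb => by
    rw [heq (e.map_target hb), e.right_inv hb]
  haveI : DiscreteTopology (MonoidHom.ker φ) := by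
    rw [discreteTopology_iff_isOpen_singleton_one]
    have hset : ({1} : Set (MonoidHom.ker φ)) = (Subtype.val) ⁻¹' e.source := by
      ext k
      simp only [Set.mem_singleton_iff, Set.mem_preimage]
      constructor
      · rintro rfl; exact h1
      · intro hk
        have hk1 : φ (k : G) = 1 := k.2
        have hval : (k : G) = 1 := e.injOn hk h1 (by rw [← heq hk, ← heq h1, hk1, map_one])
        exact Subtype.ext hval
    rw [hset]
    exact e.open_source.preimage continuous_subtype_val
  intro p
  refine IsEvenlyCovered.to_isEvenlyCovered_preimage (I := MonoidHom.ker φ)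
    (Exists.elim (?_ : ∃ t : Bundle.Trivialization (MonoidHom.ker φ) ⇑φ, p ∈ t.baseSet)
      fun t ht => IsEvenlyCovered.of_trivialization ht)
  obtain ⟨g₀, hg₀⟩ := hs p
  set B : Set H := (fun b => p⁻¹ * b) ⁻¹' e.target with hBdef
  have hB : IsOpen B := e.open_target.preimage (continuous_const.mul continuous_id)
  have hpB : p ∈ B := by
    have : p⁻¹ * p = 1 := inv_mul_cancel p
    simp only [hBdef, Set.mem_preimage, this]
    exact h1t
  set X : H → G := fun b => e.symm (p⁻¹ * b) with hXdef
  have hφX : ∀ b ∈ B, φ (X b) = p⁻¹ * b := fun b hb => hsymm _ hb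
  set κ : G → G := fun g => g * (g₀ * X (φ g))⁻¹ with hκdef
  have hκK : ∀ g, φ g ∈ B → κ g ∈ MonoidHom.ker φ := by
    intro g hg
    rw [MonoidHom.mem_ker]
    simp only [hκdef, map_mul, map_inv, hφX _ hg, hg₀]
    group
  set κm : G → MonoidHom.ker φ := fun g =>
    if hg : κ g ∈ MonoidHom.ker φ then (⟨κ g, hg⟩ : MonoidHom.ker φ) else 1 with hκm
  have hκmval : ∀ g, φ g ∈ B → ((κm g : G)) = κ g := fun g hg => by
    simp only [hκm, dif_pos (hκK g hg)]
  have hφval : ∀ k : MonoidHom.ker φ, φ (k : G) = 1 := fun k => k.2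
  have hinvB : ∀ (k : MonoidHom.ker φ) (b : H), b ∈ B → φ ((k : G) * (g₀ * X b)) = b := by
    intro k b hb
    rw [map_mul, map_mul, hφval, hφX _ hb, hg₀, one_mul, mul_inv_cancel_left]
  -- continuity facts
  have hXc : ContinuousOn (fun g => X (φ g)) (⇑φ ⁻¹' B) :=
    e.continuousOn_symm.comp ((continuous_const.mul hc).continuousOn) (fun g hg => hg)
  have hκc : ContinuousOn κ (⇑φ ⁻¹' B) :=
    (continuous_id.continuousOn).mul ((continuousOn_const.mul hXc).inv)
  have hκmc : ContinuousOn κm (⇑φ ⁻¹' B) := by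
    rw [continuousOn_iff_continuous_restrict]
    have hrw : Set.domRestrict (⇑φ ⁻¹' B) κm =
        fun g : (⇑φ ⁻¹' B) => (⟨κ (g : G), hκK _ g.2⟩ : MonoidHom.ker φ) := by
      funext g
      simp only [Set.domRestrict_apply, hκm, dif_pos (hκK _ g.2)]
    rw [hrw]
    exact Continuous.subtype_mk (continuousOn_iff_continuous_restrict.mp hκc) _
  refine ⟨{
      toPartialEquiv :=
      { toFun := fun g => (φ g, κm g)
        invFun := fun q => (q.2 : G) * (g₀ * X q.1)
        source := ⇑φ ⁻¹' B
        target := B ×ˢ Set.univ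
        map_source' := fun g hg => ⟨hg, Set.mem_univ _⟩
        map_target' := fun q hq => by
          simp only [Set.mem_preimage, hinvB q.2 q.1 hq.1]
          exact hq.1
        left_inv' := fun g hg => by
          simp only
          rw [hκmval g hg, hκdef]
          exact inv_mul_cancel_right _ _
        right_inv' := fun q hq => by
          have hb := hinvB q.2 q.1 hq.1
          have hκval : κ ((q.2 : G) * (g₀ * X q.1)) = (q.2 : G) := by
            simp only [hκdef, hb]
            exact mul_inv_cancel_right _ _
          have hker : κ ((q.2 : G) * (g₀ * X q.1)) ∈ MonoidHom.ker φ := by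
            rw [hκval]; exact q.2.2
          refine Prod.ext hb ?_
          simp only [hκm, dif_pos hker]
          exact Subtype.ext hκval }
      open_source := hB.preimage hc
      open_target := hB.prod isOpen_univ
      continuousOn_toFun := (hc.continuousOn).prodMk hκmc
      continuousOn_invFun := by
        have hXc2 : ContinuousOn (fun q : H × MonoidHom.ker φ => X q.1) (B ×ˢ Set.univ) :=
          e.continuousOn_symm.comp ((continuous_const.mul continuous_fst).continuousOn)
            (fun q hq => hq.1)
        exact ((continuous_subtype_val.comp continuous_snd).continuousOn).mul
          (continuousOn_const.mul hXc2)
      baseSet := B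
      open_baseSet := hB
      source_eq := rfl
      target_eq := rfl
      proj_toFun := fun _ _ => rfl }, hpB⟩

end CoveringLemma

section Stmt1Aux

open Complex

noncomputable def expU (z : ℂ) : ℂˣ := Units.mk0 (Complex.exp z) (Complex.exp_ne_zero z)

lemma val_isOpenEmbedding : Topology.IsOpenEmbedding (Units.val : ℂˣ → ℂ) := by
  refine ⟨Units.isEmbedding_val₀, ?_⟩
  have hr : Set.range (Units.val : ℂˣ → ℂ) = {0}ᶜ := by
    ext x
    simp only [Set.mem_range, Set.mem_compl_iff, Set.mem_singleton_iff]
    constructor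
    · rintro ⟨u, rfl⟩; exact u.ne_zero
    · intro hx; exact ⟨Units.mk0 x hx, rfl⟩
  rw [hr]
  exact isOpen_compl_singleton

noncomputable def valPH : OpenPartialHomeomorph ℂˣ ℂ :=
  Topology.IsOpenEmbedding.toOpenPartialHomeomorph Units.val val_isOpenEmbedding

noncomputable def eU : OpenPartialHomeomorph ℂ ℂˣ :=
  Complex.expPartialHomeomorph.trans valPH.symm

lemma eU_apply (z : ℂ) : eU z = expU z := by
  show valPH.symm (Complex.expPartialHomeomorph z) = expU z
  have h1 : Complex.expPartialHomeomorph z = Complex.exp z := rfl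
  have h2 : Complex.exp z = Units.val (expU z) := rfl
  rw [h1, h2]
  exact Topology.IsOpenEmbedding.toOpenPartialHomeomorph_left_inv Units.val val_isOpenEmbedding

lemma zero_mem_eU_source : (0 : ℂ) ∈ eU.source := by
  rw [eU, OpenPartialHomeomorph.trans_source]
  constructor
  · show (0 : ℂ).im ∈ Set.Ioo (-Real.pi) Real.pi
    simp [Real.pi_pos, neg_neg_iff_pos.mpr Real.pi_pos]
  · show Complex.expPartialHomeomorph 0 ∈ valPH.symm.source
    rw [OpenPartialHomeomorph.symm_source]
    show Complex.exp 0 ∈ valPH.target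
    rw [valPH, Topology.IsOpenEmbedding.toOpenPartialHomeomorph_target]
    exact ⟨expU 0, rfl⟩

end Stmt1Aux

/-- Let `m ≥ 1` and let `M` be an `m × m` integer matrix with `det M ≠ 0`.
Then the monomial map `Φ_M : (ℂˣ)^m → (ℂˣ)^m`, `Φ_M(t)_j = ∏ i, t i ^ M i j`, is a covering
map (a continuous surjection which is evenly covered over a neighborhood of each point). -/
theorem stmt1 (m : ℕ) (hm : 1 ≤ m) (M : Matrix (Fin m) (Fin m) ℤ) (hM : M.det ≠ 0)
    (Φ : (Fin m → ℂˣ) → (Fin m → ℂˣ))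
    (hΦ : Φ = fun t => fun j => ∏ i, t i ^ M i j) :
    IsCoveringMap Φ ∧ Function.Surjective Φ := by
  subst hΦ
  -- the monomial map as a monoid homomorphism
  set Φhom : (Fin m → ℂˣ) →* (Fin m → ℂˣ) :=
    { toFun := fun t => fun j => ∏ i, t i ^ M i j
      map_one' := by
        funext j
        simp
      map_mul' := fun s t => by
        funext j
        simp only [Pi.mul_apply, mul_zpow, Finset.prod_mul_distrib] } with hΦhom
  have hc : Continuous ⇑Φhom := by
    have hcc : Continuous fun (t : Fin m → ℂˣ) (j : Fin m) => ∏ i, t i ^ M i j := by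
      apply continuous_pi
      intro j
      exact continuous_finset_prod _ fun i _ =>
        (continuous_zpow (M i j)).comp (continuous_apply i)
    exact hcc
  -- the associated complex matrix and linear homeomorphism
  set A : Matrix (Fin m) (Fin m) ℂ := (M.map (Int.cast : ℤ → ℂ)).transpose with hA
  have hdetA : IsUnit A.det := by
    rw [hA, Matrix.det_transpose]
    have h1 : (M.map (Int.cast : ℤ → ℂ)).det = ((M.det : ℂ)) := by
      rw [show M.map (Int.cast : ℤ → ℂ) = (Int.castRingHom ℂ).mapMatrix M from rfl,
        ← RingHom.map_det]
      simp
    rw [h1]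
    exact isUnit_iff_ne_zero.mpr (by exact_mod_cast hM)
  haveI invA : Invertible A := A.invertibleOfIsUnitDet hdetA
  set Lequiv : (Fin m → ℂ) ≃ₗ[ℂ] (Fin m → ℂ) := A.toLinearEquiv' invA with hLe
  set Lhomeo : (Fin m → ℂ) ≃ₜ (Fin m → ℂ) :=
    (Lequiv.toContinuousLinearEquiv).toHomeomorph with hLh
  have hLapp : ∀ x : Fin m → ℂ, Lhomeo x = A.mulVec x := fun x => rfl
  have hmulj : ∀ (x : Fin m → ℂ) (j : Fin m), A.mulVec x j = ∑ i, (M i j : ℂ) * x i := by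
    intro x j
    simp [Matrix.mulVec, dotProduct, hA, Matrix.transpose_apply, Matrix.map_apply]
  -- the key exponential identity
  have keyid : ∀ (x : Fin m → ℂ) (j : Fin m),
      (∏ i, expU (x i) ^ M i j) = expU (∑ i, (M i j : ℂ) * x i) := by
    intro x j
    rw [Units.ext_iff]
    push_cast
    simp only [expU, Units.val_mk0]
    rw [Complex.exp_sum]
    exact Finset.prod_congr rfl fun i _ => (Complex.exp_int_mul _ _).symm
  -- the chart at 1
  set E0 : OpenPartialHomeomorph (Fin m → ℂ) (Fin m → ℂˣ) :=
    OpenPartialHomeomorph.pi (fun _ : Fin m => eU) with hE0def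
  have hE0app : ∀ x : Fin m → ℂ, E0 x = fun i => expU (x i) := by
    intro x
    funext i
    exact eU_apply (x i)
  have hΦE0 : ∀ x : Fin m → ℂ, Φhom (E0 x) = E0 (A.mulVec x) := by
    intro x
    funext j
    rw [hE0app, hE0app]
    show (∏ i, expU (x i) ^ M i j) = expU (A.mulVec x j)
    rw [keyid, hmulj]
  set e : OpenPartialHomeomorph (Fin m → ℂˣ) (Fin m → ℂˣ) :=
    E0.symm.trans (Lhomeo.toOpenPartialHomeomorph.trans E0) with hedef
  have h0src : (0 : Fin m → ℂ) ∈ E0.source := by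
    show (0 : Fin m → ℂ) ∈ Set.pi Set.univ fun _ => eU.source
    intro i _
    exact zero_mem_eU_source
  have h1src : (1 : Fin m → ℂˣ) ∈ e.source := by
    rw [hedef, OpenPartialHomeomorph.trans_source, OpenPartialHomeomorph.symm_source]
    have h1tgt : (1 : Fin m → ℂˣ) ∈ E0.target := by
      have := E0.map_source h0src
      rwa [show E0 (0 : Fin m → ℂ) = 1 from by rw [hE0app]; funext i; exact Units.ext (by simp [expU])]
        at this
    refine ⟨h1tgt, ?_⟩
    rw [Set.mem_preimage, OpenPartialHomeomorph.trans_source, Homeomorph.toOpenPartialHomeomorph_source]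
    refine ⟨Set.mem_univ _, ?_⟩
    rw [Set.mem_preimage]
    have hsymm1 : E0.symm (1 : Fin m → ℂˣ) = 0 := by
      have := E0.left_inv h0src
      rw [show E0 (0 : Fin m → ℂ) = 1 from by rw [hE0app]; funext i; exact Units.ext (by simp [expU])]
        at this
      exact this
    rw [hsymm1, show Lhomeo.toOpenPartialHomeomorph (0 : Fin m → ℂ) = Lhomeo 0 from rfl,
      hLapp, Matrix.mulVec_zero]
    exact h0src
  have heq : Set.EqOn (⇑Φhom) (⇑e) e.source := by
    intro t ht
    rw [hedef, OpenPartialHomeomorph.trans_source, OpenPartialHomeomorph.symm_source] at ht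
    obtain ⟨ht1, ht2⟩ := ht
    rw [Set.mem_preimage, OpenPartialHomeomorph.trans_source, Homeomorph.toOpenPartialHomeomorph_source]
      at ht2
    have hx := E0.right_inv ht1
    calc Φhom t = Φhom (E0 (E0.symm t)) := by rw [hx]
      _ = E0 (A.mulVec (E0.symm t)) := hΦE0 _
      _ = e t := by
          rw [hedef]
          show _ = (Lhomeo.toOpenPartialHomeomorph.trans E0) (E0.symm t)
          show _ = E0 (Lhomeo.toOpenPartialHomeomorph (E0.symm t))
          rw [show Lhomeo.toOpenPartialHomeomorph (E0.symm t) = Lhomeo (E0.symm t) from rfl, hLapp]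
  -- surjectivity
  have hsurj : Function.Surjective ⇑Φhom := by
    intro y
    have hz : ∀ j, ∃ w : ℂ, Complex.exp w = ((y j : ℂ)) := by
      intro j
      have : ((y j : ℂ)) ∈ Set.range Complex.exp := by
        rw [Complex.range_exp]
        exact (y j).ne_zero
      exact this
    choose z hz using hz
    refine ⟨fun i => expU (Lequiv.symm z i), ?_⟩
    have h1 : Φhom (fun i => expU (Lequiv.symm z i)) = E0 (A.mulVec (Lequiv.symm z)) := by
      rw [← hΦE0, hE0app]
    have h2 : A.mulVec (Lequiv.symm z) = z := by
      have h3 := Lequiv.apply_symm_apply z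
      rwa [show Lequiv (Lequiv.symm z) = A.mulVec (Lequiv.symm z) from rfl] at h3
    rw [h1, h2, hE0app]
    funext j
    exact Units.ext (hz j)
  exact ⟨isCoveringMap_of_chart_at_one Φhom hc e h1src heq hsurj, hsurj⟩
end

section
/- Let a(1), …, a(N) ∈ ℤ^ν and let Φ_A : (ℂˣ)^ν → (ℂˣ)^N be the monomial map Φ_A(t)_j = t^{a(j)} = ∏_{i=1}^ν t_i^{a_i(j)}. Then the image of Φ_A equals the binomial subgroup {x ∈ (ℂˣ)^N : for every u ∈ ℤ^N with ∑_{j=1}^N u_j · a(j) = 0 (as a vector in ℤ^ν), one has ∏_{j=1}^N x_j^{u_j} = 1}. -/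
/-- `ℂˣ` is divisible (as an additive group written via `Additive`). -/
noncomputable instance stmt5.divInst : DivisibleBy (Additive ℂˣ) ℤ :=
  divisibleByOfSMulRightSurj _ _ fun {n} hn x => by
    set xv : ℂ := ((Additive.toMul x : ℂˣ) : ℂ) with hxv
    have hx0 : xv ≠ 0 := (Additive.toMul x).ne_zero
    have hc : Complex.exp (Complex.log xv / n) ≠ 0 := Complex.exp_ne_zero _
    refine ⟨Additive.ofMul (Units.mk0 _ hc), ?_⟩
    have hn' : (n : ℂ) ≠ 0 := Int.cast_ne_zero.mpr hn
    have key : (Complex.exp (Complex.log xv / n)) ^ n = xv := by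
      rw [← Complex.exp_int_mul, mul_div_cancel₀ _ hn', Complex.exp_log hx0]
    apply Additive.toMul.injective
    ext
    push_cast
    simpa using key

private def stmt5.F {ν N : ℕ} (a : Fin N → Fin ν → ℤ) : (Fin N → ℤ) →+ (Fin ν → ℤ) where
  toFun u := ∑ j, u j • a j
  map_zero' := by simp
  map_add' u v := by
    simp [add_smul, Finset.sum_add_distrib]

private def stmt5.G {ν : ℕ} (t : Fin ν → ℂˣ) : (Fin ν → ℤ) →+ Additive ℂˣ where
  toFun b := Additive.ofMul (∏ i, t i ^ b i)
  map_zero' := by simp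
  map_add' b c := by
    have h : (∏ i, t i ^ ((b+c) i)) = (∏ i, t i ^ b i) * ∏ i, t i ^ c i := by
      rw [← Finset.prod_mul_distrib]
      exact Finset.prod_congr rfl fun i _ => zpow_add (t i) _ _
    exact congrArg Additive.ofMul h

/-- Let `a 1, …, a N ∈ ℤ^ν` and let `Φ_A : (ℂˣ)^ν → (ℂˣ)^N` be the monomial
map `Φ_A(t)_j = ∏ i, t i ^ a j i`. Then the image of `Φ_A` equals the binomial subgroup
`{x : ∀ u ∈ ℤ^N with ∑ j, u j • a j = 0, ∏ j, x j ^ u j = 1}`. -/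
theorem stmt5 (ν N : ℕ) (a : Fin N → Fin ν → ℤ) :
    Set.range (fun t : Fin ν → ℂˣ => fun j => ∏ i, t i ^ a j i) =
      {x : Fin N → ℂˣ |
        ∀ u : Fin N → ℤ, ∑ j, u j • a j = (0 : Fin ν → ℤ) → ∏ j, x j ^ u j = 1} := by
  ext x
  constructor
  · rintro ⟨t, rfl⟩ u hu
    have h1 : Additive.ofMul (∏ j, (∏ i, t i ^ a j i) ^ u j)
        = stmt5.G t (∑ j, u j • a j) := by
      rw [map_sum]
      simp only [ofMul_prod, ofMul_zpow]
      refine Finset.sum_congr rfl fun j _ => ?_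
      rw [map_zsmul]
      rfl
    have := h1.trans (by rw [hu, map_zero])
    simpa using congrArg Additive.toMul this
  · intro hx
    -- build the homomorphism on the range of F and extend it
    set f := stmt5.F a with hf
    set g := stmt5.G x with hg
    have hker : ∀ u ∈ f.ker, g u = 0 := by
      intro u hu
      have : ∑ j, u j • a j = 0 := hu
      have hprod := hx u this
      show Additive.ofMul (∏ j, x j ^ u j) = 0
      rw [hprod]; rfl
    -- g descends to the quotient and hence to the range of f
    let glift := QuotientAddGroup.lift f.ker g hker
    let e := QuotientAddGroup.quotientKerEquivRange f
    let g' : f.range →+ Additive ℂˣ := glift.comp e.symm.toAddMonoidHom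
    have hg' : ∀ u : Fin N → ℤ, g' ⟨f u, AddMonoidHom.mem_range.mpr ⟨u, rfl⟩⟩ = g u := by
      intro u
      have he : e.symm ⟨f u, AddMonoidHom.mem_range.mpr ⟨u, rfl⟩⟩ = QuotientAddGroup.mk u := by
        rw [AddEquiv.symm_apply_eq]
        rfl
      show glift (e.symm _) = g u
      rw [he]
      rfl
    -- extend g' along the inclusion of the range, using divisibility of ℂˣ
    obtain ⟨ψ, hψ⟩ := (Module.Baer.of_divisible (Additive ℂˣ)).extension_property_addMonoidHom
      f.range.subtype Subtype.val_injective g'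
    refine ⟨fun i => Additive.toMul (ψ (Pi.single i 1)), ?_⟩
    have hψ' : ∀ y : f.range, ψ (y : Fin ν → ℤ) = g' y := fun y =>
      congrFun (congrArg (fun h => h.toFun) hψ) y
    funext j
    have hb : ∀ b : Fin ν → ℤ, ∏ i, (Additive.toMul (ψ (Pi.single i 1))) ^ b i
        = Additive.toMul (ψ b) := by
      intro b
      have : b = ∑ i, b i • Pi.single i (1 : ℤ) := by
        funext k
        simp [Pi.single_apply, Finset.sum_apply]
      rw [show ψ b = ∑ i, b i • ψ (Pi.single i 1) by
        conv_lhs => rw [this, map_sum]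
        exact Finset.sum_congr rfl fun i _ => map_zsmul ψ _ _]
      rw [toMul_sum]
      exact Finset.prod_congr rfl fun i _ => by rw [toMul_zsmul]
    have haj : f (Pi.single j (1:ℤ)) = a j := by
      show ∑ j', (Pi.single j (1:ℤ) : Fin N → ℤ) j' • a j' = a j
      simp [Pi.single_apply, ite_smul]
    calc ∏ i, (Additive.toMul (ψ (Pi.single i 1))) ^ a j i
        = Additive.toMul (ψ (a j)) := hb (a j)
      _ = Additive.toMul (g' ⟨a j, AddMonoidHom.mem_range.mpr ⟨Pi.single j (1:ℤ), haj⟩⟩) := by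
          rw [hψ' ⟨a j, _⟩]
      _ = x j := by
          have := hg' (Pi.single j 1)
          rw [show (⟨a j, _⟩ : f.range) = ⟨f (Pi.single j 1), AddMonoidHom.mem_range.mpr ⟨_, rfl⟩⟩ from Subtype.ext haj.symm, this]
          show Additive.toMul (Additive.ofMul (∏ j', x j' ^ (Pi.single j (1:ℤ) : Fin N → ℤ) j')) = x j
          rw [toMul_ofMul, Finset.prod_eq_single j
            (fun b _ hb => by simp [Pi.single_apply, hb]) (by simp)]
          simp
end

section
/- Let a(1), …, a(N) ∈ ℤ^ν and let Φ_A : (ℝ_{>0})^ν → (ℝ_{>0})^N be the monomial map Φ_A(t)_j = t^{a(j)} = ∏_{i=1}^ν t_i^{a_i(j)}. Then the image of Φ_A equals the set {x ∈ (ℝ_{>0})^N : for every u ∈ ℤ^N with ∑_{j=1}^N u_j · a(j) = 0 (as a vector in ℤ^ν), one has ∏_{j=1}^N x_j^{u_j} = 1}. -/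
open Finset

private def coePos : {x : ℝ // 0 < x} →* ℝ :=
  { toFun := Subtype.val, map_one' := rfl, map_mul' := fun _ _ => rfl }

private lemma coePos_apply (x : {x : ℝ // 0 < x}) : coePos x = x.1 := rfl

private lemma key {ν N : ℕ} (a : Fin N → Fin ν → ℤ) (y : Fin N → ℝ)
    (h : ∀ u : Fin N → ℤ, ∑ j, u j • a j = (0 : Fin ν → ℤ) → ∑ j, (u j : ℝ) * y j = 0) :
    ∃ s : Fin ν → ℝ, ∀ j, (∑ i, (a j i : ℝ) * s i) = y j := by
  classical
  set c : Fin N → (Fin ν → ℚ) := fun j i => (a j i : ℚ) with hc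
  set T : (Fin N → ℚ) →ₗ[ℚ] (Fin ν → ℚ) :=
    { toFun := fun u => ∑ j, u j • c j
      map_add' := fun u v => by simp [add_smul, Finset.sum_add_distrib]
      map_smul' := fun q u => by simp [smul_smul, Finset.smul_sum] } with hT
  set f : (Fin N → ℚ) →ₗ[ℚ] ℝ :=
    { toFun := fun u => ∑ j, ((u j : ℝ)) * y j
      map_add' := fun u v => by push_cast; simp [add_mul, Finset.sum_add_distrib]
      map_smul' := fun q u => by
        simp [Rat.smul_def, Finset.mul_sum, mul_assoc] } with hf
  have hker : LinearMap.ker T ≤ LinearMap.ker f := by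
    intro u hu
    have hu' : (∑ j, u j • c j) = 0 := hu
    set d : ℚ := ∏ k, ((u k).den : ℚ) with hd
    have hdne : d ≠ 0 := by
      rw [hd]
      exact Finset.prod_ne_zero_iff.2 fun k _ => Nat.cast_ne_zero.2 (u k).den_nz
    set w : Fin N → ℤ := fun j => (u j).num * ∏ k ∈ Finset.univ.erase j, ((u k).den : ℤ)
      with hwdef
    have hw : ∀ j, (w j : ℚ) = u j * d := by
      intro j
      have hsplit : d = ((u j).den : ℚ) * ∏ k ∈ Finset.univ.erase j, ((u k).den : ℚ) :=
        (Finset.mul_prod_erase Finset.univ _ (Finset.mem_univ j)).symm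
      rw [hsplit, hwdef]
      push_cast
      rw [← mul_assoc, Rat.mul_den_eq_num]
    have hw0 : ∑ j, w j • a j = (0 : Fin ν → ℤ) := by
      funext i
      have h1 : (∑ j, u j * c j i) = 0 := by
        have h2 : (∑ j, u j • c j) i = 0 := by rw [hu']; rfl
        rw [Finset.sum_apply] at h2
        simpa using h2
      have h3 : (∑ j, (w j : ℚ) * (a j i : ℚ)) = 0 := by
        calc (∑ j, (w j : ℚ) * (a j i : ℚ))
            = ∑ j, d * (u j * c j i) := by
              refine Finset.sum_congr rfl fun j _ => ?_
              rw [hw j, hc]; ring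
          _ = d * ∑ j, u j * c j i := by rw [Finset.mul_sum]
          _ = 0 := by rw [h1, mul_zero]
      have h4 : (∑ j, w j • a j) i = ∑ j, w j * a j i := by
        rw [Finset.sum_apply]; simp
      rw [h4]
      exact_mod_cast h3
    have hhw := h w hw0
    have hfu : (d : ℝ) * (∑ j, ((u j : ℝ)) * y j) = 0 := by
      rw [Finset.mul_sum, ← hhw]
      refine Finset.sum_congr rfl fun j _ => ?_
      have h5 : ((w j : ℚ) : ℝ) = ((u j : ℚ) : ℝ) * ((d : ℚ) : ℝ) := by
        rw [hw j]; push_cast; ring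
      push_cast at h5 ⊢
      rw [h5]; ring
    have h6 : (∑ j, ((u j : ℝ)) * y j) = 0 := by
      rcases mul_eq_zero.1 hfu with h1 | h1
      · exact absurd h1 (by exact_mod_cast hdne)
      · exact h1
    exact h6
  set g₀ : LinearMap.range T →ₗ[ℚ] ℝ :=
    ((LinearMap.ker T).liftQ f hker).comp T.quotKerEquivRange.symm.toLinearMap with hg₀def
  have hg₀ : ∀ u : Fin N → ℚ, g₀ ⟨T u, LinearMap.mem_range_self T u⟩ = f u := by
    intro u
    rw [hg₀def]
    simp only [LinearMap.comp_apply, LinearEquiv.coe_toLinearMap]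
    rw [LinearMap.quotKerEquivRange_symm_apply_image]
    exact Submodule.liftQ_apply _ f u
  obtain ⟨g, hg⟩ := LinearMap.exists_extend g₀
  refine ⟨fun i => g (Pi.single i 1), fun j => ?_⟩
  have hTj : T (Pi.single j 1) = c j := by
    have : T (Pi.single j 1) = ∑ k, (Pi.single j (1 : ℚ) : Fin N → ℚ) k • c k := rfl
    rw [this, Finset.sum_eq_single j]
    · simp
    · intro k _ hk; rw [Pi.single_eq_of_ne hk, zero_smul]
    · intro hk; exact absurd (Finset.mem_univ j) hk
  have hfj : f (Pi.single j 1) = y j := by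
    have : f (Pi.single j 1) = ∑ k, (((Pi.single j (1 : ℚ) : Fin N → ℚ) k : ℚ) : ℝ) * y k := rfl
    rw [this, Finset.sum_eq_single j]
    · simp
    · intro k _ hk; rw [Pi.single_eq_of_ne hk]; simp
    · intro hk; exact absurd (Finset.mem_univ j) hk
  have hgc : g (c j) = y j := by
    have hmem : c j ∈ LinearMap.range T := ⟨Pi.single j 1, hTj⟩
    have h7 : g (c j) = g₀ ⟨c j, hmem⟩ := by
      simpa using congrArg (fun φ => φ (⟨c j, hmem⟩ : LinearMap.range T)) hg
    rw [h7]
    have h8 : (⟨c j, hmem⟩ : LinearMap.range T) = ⟨T (Pi.single j 1),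
        LinearMap.mem_range_self T _⟩ := Subtype.ext hTj.symm
    rw [h8, hg₀ (Pi.single j 1), hfj]
  have hcj : (∑ i, c j i • (Pi.single i 1 : Fin ν → ℚ)) = c j := by
    funext i'
    rw [Finset.sum_apply]
    simp [Pi.single_apply]
  calc (∑ i, (a j i : ℝ) * g (Pi.single i 1))
      = ∑ i, c j i • g (Pi.single i 1) := by
        refine Finset.sum_congr rfl fun i _ => ?_
        rw [Rat.smul_def, hc]; push_cast; ring
    _ = g (∑ i, c j i • (Pi.single i 1 : Fin ν → ℚ)) := by rw [map_sum]; simp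
    _ = g (c j) := by rw [hcj]
    _ = y j := hgc

/-- Let `a 1, …, a N ∈ ℤ^ν` and let `Φ_A : (ℝ_{>0})^ν → (ℝ_{>0})^N` be the
monomial map `Φ_A(t)_j = ∏ i, t i ^ a j i`. Then the image of `Φ_A` equals the set
`{x : ∀ u ∈ ℤ^N with ∑ j, u j • a j = 0, ∏ j, x j ^ u j = 1}`. -/
theorem stmt6 (ν N : ℕ) (a : Fin N → Fin ν → ℤ) :
    Set.range (fun t : Fin ν → {x : ℝ // 0 < x} => fun j => ∏ i, t i ^ a j i) =
      {x : Fin N → {x : ℝ // 0 < x} |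
        ∀ u : Fin N → ℤ, ∑ j, u j • a j = (0 : Fin ν → ℤ) → ∏ j, x j ^ u j = 1} := by
  ext x
  simp only [Set.mem_range, Set.mem_setOf_eq]
  constructor
  · rintro ⟨t, rfl⟩ u hu
    have hcomp : ∀ i : Fin ν, (∑ j, u j * a j i) = 0 := by
      intro i
      have h9 := congrFun hu i
      rw [Finset.sum_apply] at h9
      simpa using h9
    apply Subtype.ext
    have hval : ((∏ j, (∏ i, t i ^ a j i) ^ u j : {x : ℝ // 0 < x}) : ℝ)
        = ∏ j, (∏ i, ((t i : ℝ)) ^ a j i) ^ u j := by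
      rw [show ((∏ j, (∏ i, t i ^ a j i) ^ u j : {x : ℝ // 0 < x}) : ℝ)
          = coePos (∏ j, (∏ i, t i ^ a j i) ^ u j) from rfl, map_prod]
      refine Finset.prod_congr rfl fun j _ => ?_
      have : coePos ((∏ i, t i ^ a j i) ^ u j)
          = (coePos (∏ i, t i ^ a j i)) ^ u j := rfl
      rw [this, map_prod]
      rfl
    rw [hval]
    set B : Fin N → ℝ := fun j => ∏ i, ((t i : ℝ)) ^ a j i with hB
    have hBpos : ∀ j, 0 < B j := fun j =>
      Finset.prod_pos fun i _ => zpow_pos (t i).2 _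
    have hP : 0 < ∏ j, B j ^ u j :=
      Finset.prod_pos fun j _ => zpow_pos (hBpos j) _
    have hlogB : ∀ j, Real.log (B j) = ∑ i, (a j i : ℝ) * Real.log (t i : ℝ) := by
      intro j
      rw [hB]
      rw [Real.log_prod (fun i _ => zpow_ne_zero _ (t i).2.ne')]
      exact Finset.sum_congr rfl fun i _ => Real.log_zpow _ _
    have hlog : Real.log (∏ j, B j ^ u j) = 0 := by
      rw [Real.log_prod (fun j _ => zpow_ne_zero _ (hBpos j).ne')]
      calc (∑ j, Real.log (B j ^ u j))
          = ∑ j, ∑ i, (u j : ℝ) * ((a j i : ℝ) * Real.log (t i : ℝ)) := by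
            refine Finset.sum_congr rfl fun j _ => ?_
            rw [Real.log_zpow, hlogB j, Finset.mul_sum]
        _ = ∑ i, (∑ j, (u j : ℝ) * (a j i : ℝ)) * Real.log (t i : ℝ) := by
            rw [Finset.sum_comm]
            exact Finset.sum_congr rfl fun i _ => by rw [Finset.sum_mul]; exact Finset.sum_congr rfl fun j _ => by ring
        _ = 0 := by
            refine Finset.sum_eq_zero fun i _ => ?_
            have : (∑ j, (u j : ℝ) * (a j i : ℝ)) = ((∑ j, u j * a j i : ℤ) : ℝ) := by
              push_cast; rfl
            rw [this, hcomp i]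
            simp
    show (∏ j, B j ^ u j) = ((1 : {x : ℝ // 0 < x}) : ℝ)
    rw [← Real.exp_log hP, hlog, Real.exp_zero]; rfl
  · intro hx
    have h : ∀ u : Fin N → ℤ, ∑ j, u j • a j = (0 : Fin ν → ℤ) →
        ∑ j, (u j : ℝ) * Real.log (x j) = 0 := by
      intro u hu
      have h1 : (∏ j, ((x j : ℝ)) ^ u j) = 1 := by
        have h2 := congrArg coePos (hx u hu)
        rw [map_prod] at h2
        rw [show (1:ℝ) = coePos 1 from rfl]
        rw [← h2]
        rfl
      have h3 : ∑ j, (u j : ℝ) * Real.log (x j) = Real.log (∏ j, ((x j : ℝ)) ^ u j) := by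
        rw [Real.log_prod (fun j _ => zpow_ne_zero _ (x j).2.ne')]
        exact Finset.sum_congr rfl fun j _ => (Real.log_zpow _ _).symm
      rw [h3, h1, Real.log_one]
    obtain ⟨s, hs⟩ := key a (fun j => Real.log (x j)) h
    refine ⟨fun i => ⟨Real.exp (s i), Real.exp_pos _⟩, ?_⟩
    funext j
    apply Subtype.ext
    have hco : ((∏ i, (⟨Real.exp (s i), Real.exp_pos _⟩ : {x : ℝ // 0 < x}) ^ a j i :
        {x : ℝ // 0 < x}) : ℝ) = ∏ i, Real.exp (s i) ^ a j i := by
      rw [show ((∏ i, (⟨Real.exp (s i), Real.exp_pos _⟩ : {x : ℝ // 0 < x}) ^ a j i :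
          {x : ℝ // 0 < x}) : ℝ) = coePos (∏ i, (⟨Real.exp (s i), Real.exp_pos _⟩ :
          {x : ℝ // 0 < x}) ^ a j i) from rfl, map_prod]
      rfl
    show _ = ((x j : ℝ))
    rw [hco]
    have hexp : ∀ i, Real.exp (s i) ^ a j i = Real.exp ((a j i : ℝ) * s i) := by
      intro i
      have hpos : (0 : ℝ) < Real.exp (s i) ^ a j i := zpow_pos (Real.exp_pos _) _
      rw [← Real.exp_log hpos, Real.log_zpow, Real.log_exp]
    calc (∏ i, Real.exp (s i) ^ a j i)
        = ∏ i, Real.exp ((a j i : ℝ) * s i) := Finset.prod_congr rfl fun i _ => hexp i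
      _ = Real.exp (∑ i, (a j i : ℝ) * s i) := (Real.exp_sum _ _).symm
      _ = Real.exp (Real.log (x j)) := by rw [hs j]
      _ = (x j : ℝ) := Real.exp_log (x j).2
end

section
/- Let a(1), …, a(n+m) ∈ ℤ^ν and suppose the parameter exponent vectors a(n+1), …, a(n+m) span ℚ^ν over ℚ. Let X* := {(x, c) ∈ (ℂˣ)^n × (ℂˣ)^m : ∃ t ∈ (ℂˣ)^ν with x_i = t^{a(i)} for i = 1,…,n and c_j = t^{a(n+j)} for j = 1,…,m}, and let F : X* → (ℂˣ)^m be the restriction of the coordinate projection (x, c) ↦ c. Then F is a proper map, i.e., preimages of compact sets are compact (equivalently, F is a proper map in the topological sense), where X* carries the subspace topology from ℂ^{n+m} and (ℂˣ)^m the subspace topology from ℂ^m. -/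
open Finset

private lemma zpow_sum_aux {G : Type*} [CommGroupWithZero G] {ι : Type*}
    {u : G} (hu : u ≠ 0) (s : Finset ι) (f : ι → ℤ) :
    u ^ (∑ j ∈ s, f j) = ∏ j ∈ s, u ^ f j := by
  induction s using Finset.cons_induction with
  | empty => simp
  | cons a s ha ih => rw [Finset.sum_cons, Finset.prod_cons, zpow_add₀ hu, ih]

private lemma exists_int_rel {ν m : ℕ} (v : Fin m → Fin ν → ℤ)
    (hspan : Submodule.span ℚ
      (Set.range fun j : Fin m => fun i : Fin ν => (v j i : ℚ)) = ⊤)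
    (l : Fin ν) :
    ∃ (N : ℕ) (z : Fin m → ℤ), 0 < N ∧
      ∀ i, (∑ j, z j * v j i) = if i = l then (N : ℤ) else 0 := by
  have hmem : (Pi.single l 1 : Fin ν → ℚ) ∈ Submodule.span ℚ
      (Set.range fun j : Fin m => fun i : Fin ν => (v j i : ℚ)) := by
    rw [hspan]; trivial
  rw [Submodule.mem_span_range_iff_exists_fun] at hmem
  obtain ⟨c, hc⟩ := hmem
  refine ⟨∏ j, (c j).den, fun j => (c j).num * ∏ k ∈ Finset.univ.erase j, ((c k).den : ℤ),
    Finset.prod_pos fun j _ => (c j).pos, ?_⟩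
  intro i
  have hceval : ∑ j, c j * (v j i : ℚ) = if i = l then 1 else 0 := by
    have h := congrFun hc i
    simpa [Pi.single_apply] using h
  have key : ((∑ j, ((c j).num * ∏ k ∈ Finset.univ.erase j, ((c k).den : ℤ)) * v j i : ℤ) : ℚ)
      = ((∏ j, (c j).den : ℕ) : ℚ) * ∑ j, c j * (v j i : ℚ) := by
    push_cast
    rw [Finset.mul_sum]
    refine Finset.sum_congr rfl fun j _ => ?_
    have hnum : ((c j).num : ℚ) = c j * ((c j).den : ℚ) := by
      have := Rat.num_div_den (c j)
      exact (Rat.mul_den_eq_num (c j)).symm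
    have hprod : (∏ k, ((c k).den : ℚ)) = ((c j).den : ℚ) *
        ∏ k ∈ Finset.univ.erase j, ((c k).den : ℚ) :=
      (Finset.mul_prod_erase _ _ (Finset.mem_univ j)).symm
    rw [hprod, hnum]; ring
  rw [hceval] at key
  by_cases h : i = l <;> simp only [h, if_true, if_false, mul_one, mul_zero] at key ⊢ <;>
    exact_mod_cast key

private lemma zpow_le_bound {x B : ℝ} (hB : 1 ≤ B) (h1 : B⁻¹ ≤ x) (h2 : x ≤ B) (k : ℤ) :
    x ^ k ≤ B ^ k.natAbs := by
  have hB0 : (0:ℝ) < B := lt_of_lt_of_le one_pos hB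
  have hx0 : (0:ℝ) < x := lt_of_lt_of_le (inv_pos.2 hB0) h1
  obtain ⟨nn, rfl | rfl⟩ := Int.eq_nat_or_neg k
  · simp only [Int.natAbs_natCast, zpow_natCast]
    exact pow_le_pow_left₀ hx0.le h2 _
  · simp only [Int.natAbs_neg, Int.natAbs_natCast, zpow_neg, zpow_natCast]
    rw [inv_le_comm₀ (pow_pos hx0 _) (pow_pos hB0 _)]
    rw [← inv_pow]
    exact pow_le_pow_left₀ (inv_pos.2 hB0).le h1 _

private lemma zpow_ge_bound {x B : ℝ} (hB : 1 ≤ B) (h1 : B⁻¹ ≤ x) (h2 : x ≤ B) (k : ℤ) :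
    (B ^ k.natAbs)⁻¹ ≤ x ^ k := by
  have hB0 : (0:ℝ) < B := lt_of_lt_of_le one_pos hB
  have hx0 : (0:ℝ) < x := lt_of_lt_of_le (inv_pos.2 hB0) h1
  obtain ⟨nn, rfl | rfl⟩ := Int.eq_nat_or_neg k
  · simp only [Int.natAbs_natCast, zpow_natCast, ← inv_pow]
    exact pow_le_pow_left₀ (inv_pos.2 hB0).le h1 _
  · simp only [Int.natAbs_neg, Int.natAbs_natCast, zpow_neg, zpow_natCast]
    exact inv_anti₀ (pow_pos hx0 _) (pow_le_pow_left₀ hx0.le h2 _)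

/-- Let `a 1, …, a (n+m) ∈ ℤ^ν` with the parameter exponent vectors
`a (n+1), …, a (n+m)` spanning `ℚ^ν` over `ℚ`. Let
`X* = {(x,c) ∈ (ℂˣ)^n × (ℂˣ)^m : ∃ t ∈ (ℂˣ)^ν, x i = t ^ a i, c j = t ^ a (n+j)}` and let
`F : X* → (ℂˣ)^m` be the restriction of `(x,c) ↦ c`.  Then `F` is continuous and proper:
preimages of compact subsets of `(ℂˣ)^m` are compact (in the subspace topologies). -/
theorem stmt7 (ν n m : ℕ) (a : Fin (n + m) → Fin ν → ℤ)
    (hspan : Submodule.span ℚ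
      (Set.range fun j : Fin m => fun i : Fin ν => (a (Fin.natAdd n j) i : ℚ)) = ⊤)
    (Xstar : Set ((Fin n → ℂ) × (Fin m → ℂ)))
    (hX : Xstar = {p | (∀ i, p.1 i ≠ 0) ∧ (∀ j, p.2 j ≠ 0) ∧
      ∃ t : Fin ν → ℂ, (∀ l, t l ≠ 0) ∧
        (∀ i, p.1 i = ∏ l, t l ^ a (Fin.castAdd m i) l) ∧
        (∀ j, p.2 j = ∏ l, t l ^ a (Fin.natAdd n j) l)}) :
    Continuous (fun p : Xstar => (p : (Fin n → ℂ) × (Fin m → ℂ)).2) ∧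
    ∀ K : Set (Fin m → ℂ), (∀ c ∈ K, ∀ j, c j ≠ 0) → IsCompact K →
      IsCompact {p : Xstar | (p : (Fin n → ℂ) × (Fin m → ℂ)).2 ∈ K} := by
  subst hX
  refine ⟨continuous_snd.comp continuous_subtype_val, ?_⟩
  intro K hK0 hKc
  rcases K.eq_empty_or_nonempty with rfl | hKne
  · simp only [Set.mem_empty_iff_false, Set.setOf_false]
    exact isCompact_empty
  -- bounds on K
  obtain ⟨M, hM⟩ := isBounded_iff_forall_norm_le.1 hKc.isBounded
  have hmin : ∀ j : Fin m, ∃ δ : ℝ, 0 < δ ∧ ∀ c ∈ K, δ ≤ ‖c j‖ := by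
    intro j
    obtain ⟨c₀, hc₀K, hc₀min⟩ := hKc.exists_isMinOn hKne
      ((continuous_norm.comp (continuous_apply j)).continuousOn)
    exact ⟨‖c₀ j‖, norm_pos_iff.2 (hK0 c₀ hc₀K j), fun c hc => hc₀min hc⟩
  choose δ hδpos hδ using hmin
  set B : ℝ := M + 1 + ∑ j, (δ j)⁻¹ with hBdef
  have hsum_nonneg : (0:ℝ) ≤ ∑ j, (δ j)⁻¹ :=
    Finset.sum_nonneg fun j _ => (inv_pos.2 (hδpos j)).le
  have hM0 : 0 ≤ M := by
    obtain ⟨c, hc⟩ := hKne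
    exact (norm_nonneg c).trans (hM c hc)
  have hB1 : (1:ℝ) ≤ B := by simp only [hBdef]; linarith
  have hB0 : (0:ℝ) < B := lt_of_lt_of_le one_pos hB1
  have hBound : ∀ c ∈ K, ∀ j, B⁻¹ ≤ ‖c j‖ ∧ ‖c j‖ ≤ B := by
    intro c hc j
    constructor
    · have h1 : (δ j)⁻¹ ≤ B := by
        have : (δ j)⁻¹ ≤ ∑ j', (δ j')⁻¹ :=
          Finset.single_le_sum (fun j' _ => (inv_pos.2 (hδpos j')).le) (Finset.mem_univ j)
        simp only [hBdef]; linarith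
      exact le_trans (inv_le_of_inv_le₀ (hδpos j) h1) (hδ j c hc)
    · refine le_trans ((norm_le_pi_norm c j).trans (hM c hc)) ?_
      simp only [hBdef]; linarith
  -- integer relations
  choose N z hNpos hrel using fun l =>
    exists_int_rel (fun j => a (Fin.natAdd n j)) hspan l
  let Z : Fin ν → ℕ := fun l => ∑ j, (z l j).natAbs
  set g : (Fin ν → ℂ) → (Fin m → ℂ) :=
    fun t j => ∏ l, t l ^ a (Fin.natAdd n j) l with hgdef
  -- key magnitude bounds
  have hkey : ∀ t : Fin ν → ℂ, (∀ l, t l ≠ 0) → g t ∈ K →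
      ∀ l, (B ^ Z l)⁻¹ ≤ ‖t l‖ ∧ ‖t l‖ ≤ B ^ Z l := by
    intro t ht htK l
    have hmag : ∏ j, ‖g t j‖ ^ z l j = ‖t l‖ ^ (N l : ℤ) := by
      have hnorm_g : ∀ j, ‖g t j‖ = ∏ l', ‖t l'‖ ^ a (Fin.natAdd n j) l' := by
        intro j; rw [hgdef]; simp [norm_prod, norm_zpow]
      calc ∏ j, ‖g t j‖ ^ z l j
          = ∏ j, ∏ l', (‖t l'‖ ^ a (Fin.natAdd n j) l') ^ z l j := by
            refine Finset.prod_congr rfl fun j _ => ?_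
            rw [hnorm_g j, ← Finset.prod_zpow]
        _ = ∏ l', ∏ j, ‖t l'‖ ^ (z l j * a (Fin.natAdd n j) l') := by
            rw [Finset.prod_comm]
            exact Finset.prod_congr rfl fun l' _ => Finset.prod_congr rfl fun j _ => by
              rw [mul_comm (z l j), zpow_mul]
        _ = ∏ l', ‖t l'‖ ^ (∑ j, z l j * a (Fin.natAdd n j) l') := by
            exact Finset.prod_congr rfl fun l' _ =>
              (zpow_sum_aux (norm_ne_zero_iff.2 (ht l')) _ _).symm
        _ = ∏ l', ‖t l'‖ ^ (if l' = l then (N l : ℤ) else 0) := by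
            exact Finset.prod_congr rfl fun l' _ => by rw [hrel l l']
        _ = ‖t l‖ ^ (N l : ℤ) := by
            rw [Finset.prod_eq_single l (fun l' _ hl' => by rw [if_neg hl', zpow_zero])
              (fun h => absurd (Finset.mem_univ l) h)]
            rw [if_pos rfl]
    have hup : ∏ j, ‖g t j‖ ^ z l j ≤ B ^ Z l := by
      calc ∏ j, ‖g t j‖ ^ z l j ≤ ∏ j, B ^ (z l j).natAbs := by
            refine Finset.prod_le_prod (fun j _ => zpow_nonneg (norm_nonneg _) _) ?_
            intro j _
            exact zpow_le_bound hB1 ((hBound _ htK j).1) ((hBound _ htK j).2) _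
        _ = B ^ Z l := Finset.prod_pow_eq_pow_sum _ _ _
    have hlo : (B ^ Z l)⁻¹ ≤ ∏ j, ‖g t j‖ ^ z l j := by
      have : ∏ j, (B ^ (z l j).natAbs)⁻¹ ≤ ∏ j, ‖g t j‖ ^ z l j := by
        refine Finset.prod_le_prod (fun j _ => (inv_pos.2 (pow_pos hB0 _)).le) ?_
        intro j _
        exact zpow_ge_bound hB1 ((hBound _ htK j).1) ((hBound _ htK j).2) _
      calc (B ^ Z l)⁻¹ = ∏ j, (B ^ (z l j).natAbs)⁻¹ := by
            rw [Finset.prod_inv_distrib, Finset.prod_pow_eq_pow_sum]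
        _ ≤ _ := this
    rw [hmag, zpow_natCast] at hup hlo
    have htl0 : (0:ℝ) < ‖t l‖ := norm_pos_iff.2 (ht l)
    have hBZ1 : (1:ℝ) ≤ B ^ Z l := one_le_pow₀ hB1
    constructor
    · by_contra h
      push_neg at h
      have h1 : ‖t l‖ ^ N l ≤ ‖t l‖ :=
        pow_le_of_le_one htl0.le
          (le_of_lt (lt_of_lt_of_le h (inv_le_one_of_one_le₀ hBZ1))) (hNpos l).ne' 
      exact absurd (hlo.trans h1) (not_le.2 h)
    · by_contra h
      push_neg at h
      have h1 : ‖t l‖ ≤ ‖t l‖ ^ N l :=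
        le_self_pow₀ (hBZ1.trans h.le) (hNpos l).ne'
      exact absurd (h1.trans hup) (not_le.2 h)
  -- the compact parameter region
  set Q : Set (Fin ν → ℂ) :=
    {t | ∀ l, (B ^ Z l)⁻¹ ≤ ‖t l‖ ∧ ‖t l‖ ≤ B ^ Z l} with hQdef
  set T : Set (Fin ν → ℂ) := Q ∩ g ⁻¹' K with hTdef
  have hQne0 : ∀ t ∈ Q, ∀ l, t l ≠ 0 := by
    intro t ht l
    exact norm_pos_iff.1 (lt_of_lt_of_le (inv_pos.2 (pow_pos hB0 _)) (ht l).1)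
  have hQclosed : IsClosed Q := by
    have : Q = ⋂ l, (fun t : Fin ν → ℂ => ‖t l‖) ⁻¹' Set.Icc ((B ^ Z l)⁻¹) (B ^ Z l) := by
      ext t; simp [hQdef, Set.mem_iInter, Set.mem_Icc, forall_and]
    rw [this]
    exact isClosed_iInter fun l => isClosed_Icc.preimage ((continuous_apply l).norm)
  have hgc : ContinuousOn g Q := by
    intro t ht
    apply ContinuousAt.continuousWithinAt
    apply continuousAt_pi.2
    intro j
    exact tendsto_finset_prod _ fun l _ =>
      ContinuousAt.zpow₀ ((continuous_apply l).continuousAt) _ (Or.inl (hQne0 t ht l))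
  have hTclosed : IsClosed T := hgc.preimage_isClosed_of_isClosed hQclosed hKc.isClosed
  have hTbdd : Bornology.IsBounded T := by
    rw [isBounded_iff_forall_norm_le]
    refine ⟨B ^ (∑ l, Z l), fun t ht => ?_⟩
    rw [pi_norm_le_iff_of_nonneg (pow_nonneg hB0.le _)]
    intro l
    refine (ht.1 l).2.trans (pow_le_pow_right₀ hB1 ?_)
    exact Finset.single_le_sum (fun l' _ => Nat.zero_le _) (Finset.mem_univ l)
  have hTcompact : IsCompact T := Metric.isCompact_iff_isClosed_bounded.2 ⟨hTclosed, hTbdd⟩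
  set Φ : (Fin ν → ℂ) → (Fin n → ℂ) × (Fin m → ℂ) :=
    fun t => (fun i => ∏ l, t l ^ a (Fin.castAdd m i) l, g t) with hΦdef
  have hΦc : ContinuousOn Φ T := by
    intro t ht
    apply ContinuousAt.continuousWithinAt
    have ht0 : ∀ l, t l ≠ 0 := hQne0 t ht.1
    apply ContinuousAt.prodMk
    · apply continuousAt_pi.2; intro i
      exact tendsto_finset_prod _ fun l _ =>
        ContinuousAt.zpow₀ ((continuous_apply l).continuousAt) _ (Or.inl (ht0 l))
    · apply continuousAt_pi.2; intro j
      exact tendsto_finset_prod _ fun l _ =>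
        ContinuousAt.zpow₀ ((continuous_apply l).continuousAt) _ (Or.inl (ht0 l))
  have himg : IsCompact (Φ '' T) := hTcompact.image_of_continuousOn hΦc
  rw [Subtype.isCompact_iff]
  convert himg using 1
  ext q
  constructor
  · rintro ⟨⟨q', hq'⟩, hqK, rfl⟩
    obtain ⟨hx0, hc0, t, ht0, hxt, hct⟩ := hq'
    have hgt : g t = q'.2 := by funext j; exact (hct j).symm
    have htK : g t ∈ K := by rw [hgt]; exact hqK
    refine ⟨t, ⟨hkey t ht0 htK, htK⟩, ?_⟩
    exact Prod.ext (funext fun i => (hxt i).symm) hgt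
  · rintro ⟨t, ⟨htb, htK⟩, rfl⟩
    have ht0 : ∀ l, t l ≠ 0 := hQne0 t htb
    refine ⟨⟨Φ t, ⟨?_, ?_, t, ht0, fun i => rfl, fun j => rfl⟩⟩, htK, rfl⟩
    · intro i
      show (∏ l, t l ^ a (Fin.castAdd m i) l) ≠ 0
      exact Finset.prod_ne_zero_iff.2 fun l _ => zpow_ne_zero _ (ht0 l)
    · intro j
      show (∏ l, t l ^ a (Fin.natAdd n j) l) ≠ 0
      exact Finset.prod_ne_zero_iff.2 fun l _ => zpow_ne_zero _ (ht0 l)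
end

section
/- Let a(1), …, a(n+m) ∈ ℤ^ν and suppose the parameter exponent vectors a(n+1), …, a(n+m) span ℚ^ν over ℚ. Let X* := {(x, c) ∈ (ℝ_{>0})^n × (ℝ_{>0})^m : ∃ t ∈ (ℝ_{>0})^ν with x_i = t^{a(i)} for i = 1,…,n and c_j = t^{a(n+j)} for j = 1,…,m}, and let F : X* → (ℝ_{>0})^m be the restriction of the coordinate projection (x, c) ↦ c. Then F is a proper map, i.e., preimages of compact sets are compact, where X* carries the subspace topology from ℝ^{n+m} and (ℝ_{>0})^m the subspace topology from ℝ^m. -/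
/-- Real-positive analogue of Statement 7: with the parameter exponent
vectors `a (n+1), …, a (n+m)` spanning `ℚ^ν`, the restriction of the projection
`(x,c) ↦ c` to `X* ⊂ (ℝ_{>0})^n × (ℝ_{>0})^m` is continuous and proper: preimages of
compact subsets of `(ℝ_{>0})^m` are compact (in the subspace topologies). -/
theorem stmt8 (ν n m : ℕ) (a : Fin (n + m) → Fin ν → ℤ)
    (hspan : Submodule.span ℚ
      (Set.range fun j : Fin m => fun i : Fin ν => (a (Fin.natAdd n j) i : ℚ)) = ⊤)
    (Xstar : Set ((Fin n → ℝ) × (Fin m → ℝ)))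
    (hX : Xstar = {p | (∀ i, 0 < p.1 i) ∧ (∀ j, 0 < p.2 j) ∧
      ∃ t : Fin ν → ℝ, (∀ l, 0 < t l) ∧
        (∀ i, p.1 i = ∏ l, t l ^ a (Fin.castAdd m i) l) ∧
        (∀ j, p.2 j = ∏ l, t l ^ a (Fin.natAdd n j) l)}) :
    Continuous (fun p : Xstar => (p : (Fin n → ℝ) × (Fin m → ℝ)).2) ∧
    ∀ K : Set (Fin m → ℝ), (∀ c ∈ K, ∀ j, 0 < c j) → IsCompact K →
      IsCompact {p : Xstar | (p : (Fin n → ℝ) × (Fin m → ℝ)).2 ∈ K} := by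
  constructor
  · exact continuous_snd.comp continuous_subtype_val
  intro K hKpos hK
  -- Step 1: extract rational coefficients expressing each basis vector
  have hq : ∀ l : Fin ν, ∃ q : Fin m → ℚ,
      ∀ i, ∑ j, q j * (a (Fin.natAdd n j) i : ℚ) = if i = l then 1 else 0 := by
    intro l
    have hmem : (Pi.single l 1 : Fin ν → ℚ) ∈ Submodule.span ℚ
        (Set.range fun j : Fin m => fun i : Fin ν => (a (Fin.natAdd n j) i : ℚ)) := by
      rw [hspan]; trivial
    rw [Submodule.mem_span_range_iff_exists_fun] at hmem
    obtain ⟨q, hqe⟩ := hmem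
    refine ⟨q, fun i => ?_⟩
    have h := congrFun hqe i
    simpa [Pi.single_apply, smul_eq_mul] using h
  choose q hqd using hq
  have hδ : ∀ l i, ∑ j, (q l j : ℝ) * (a (Fin.natAdd n j) i : ℝ)
      = if i = l then 1 else 0 := by
    intro l i
    calc ∑ j, (q l j : ℝ) * (a (Fin.natAdd n j) i : ℝ)
        = ((∑ j, q l j * (a (Fin.natAdd n j) i : ℚ) : ℚ) : ℝ) := by push_cast; rfl
      _ = if i = l then 1 else 0 := by rw [hqd l i]; split_ifs <;> simp
  -- definitions
  set logt : (Fin m → ℝ) → Fin ν → ℝ :=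
    fun c l => ∑ j, (q l j : ℝ) * Real.log (c j) with hlogt
  have hrec : ∀ (c : Fin m → ℝ) (τ : Fin ν → ℝ),
      (∀ j, Real.log (c j) = ∑ i, (a (Fin.natAdd n j) i : ℝ) * τ i) →
      ∀ l, logt c l = τ l := by
    intro c τ h l
    simp only [hlogt]
    calc ∑ j, (q l j : ℝ) * Real.log (c j)
        = ∑ j, ∑ i, (q l j : ℝ) * ((a (Fin.natAdd n j) i : ℝ) * τ i) := by
          simp_rw [h, Finset.mul_sum]
      _ = ∑ i, (∑ j, (q l j : ℝ) * (a (Fin.natAdd n j) i : ℝ)) * τ i := by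
          rw [Finset.sum_comm]
          refine Finset.sum_congr rfl fun i _ => ?_
          rw [Finset.sum_mul]
          exact Finset.sum_congr rfl fun j _ => by ring
      _ = τ l := by simp_rw [hδ]; simp
  have hprod : ∀ (b : Fin ν → ℤ) (τ : Fin ν → ℝ),
      ∏ l, Real.exp (τ l) ^ b l = Real.exp (∑ l, (b l : ℝ) * τ l) := by
    intro b τ
    rw [Real.exp_sum]
    refine Finset.prod_congr rfl fun l _ => ?_
    rw [← Real.rpow_intCast, Real.rpow_def_of_pos (Real.exp_pos _), Real.log_exp, mul_comm]
  have hlogprod : ∀ (b : Fin ν → ℤ) (t : Fin ν → ℝ), (∀ l, 0 < t l) →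
      Real.log (∏ l, t l ^ b l) = ∑ l, (b l : ℝ) * Real.log (t l) := by
    intro b t ht
    rw [Real.log_prod (fun l _ => zpow_ne_zero _ (ht l).ne')]
    exact Finset.sum_congr rfl fun l _ => Real.log_zpow _ _
  set g : (Fin m → ℝ) → Fin n → ℝ :=
    fun c i => Real.exp (∑ l, (a (Fin.castAdd m i) l : ℝ) * logt c l) with hg
  -- the linear subspace of achievable log-parameter vectors
  let M : (Fin ν → ℝ) →ₗ[ℝ] (Fin m → ℝ) :=
    { toFun := fun τ j => ∑ i, (a (Fin.natAdd n j) i : ℝ) * τ i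
      map_add' := by
        intro τ σ; funext j; simp [mul_add, Finset.sum_add_distrib]
      map_smul' := by
        intro r τ; funext j
        simp [Finset.mul_sum, smul_eq_mul]
        exact Finset.sum_congr rfl fun i _ => by ring }
  set W : Submodule ℝ (Fin m → ℝ) := LinearMap.range M with hW
  have hWclosed : IsClosed (W : Set (Fin m → ℝ)) := W.closed_of_finiteDimensional
  set hmap : (Fin m → ℝ) → (Fin m → ℝ) := fun c j => Real.log (c j) with hhm
  set S : Set (Fin m → ℝ) := K ∩ hmap ⁻¹' (W : Set (Fin m → ℝ)) with hS
  -- S is compact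
  have hmapcont : ContinuousOn hmap K := by
    rw [continuousOn_pi]
    intro j
    refine Real.continuousOn_log.comp (continuous_apply j).continuousOn ?_
    intro c hc
    exact (hKpos c hc j).ne'
  have hScomp : IsCompact S := by
    have hCS : CompactSpace K := isCompact_iff_compactSpace.mp hK
    have hcl : IsClosed {x : K | hmap x.1 ∈ W} :=
      hWclosed.preimage hmapcont.restrict
    have hcc : IsCompact {x : K | hmap x.1 ∈ W} := hcl.isCompact
    have himg : Subtype.val '' {x : K | hmap x.1 ∈ W} = S := by
      ext c
      constructor
      · rintro ⟨⟨c, hc⟩, hmem, rfl⟩; exact ⟨hc, hmem⟩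
      · rintro ⟨hc, hmem⟩; exact ⟨⟨c, hc⟩, hmem, rfl⟩
    rw [← himg]
    exact hcc.image continuous_subtype_val
  -- the ambient preimage set
  set T : Set ((Fin n → ℝ) × (Fin m → ℝ)) := Xstar ∩ {p | p.2 ∈ K} with hT
  have hTeq : T = (fun c => (g c, c)) '' S := by
    ext p
    constructor
    · rintro ⟨hpX, hpK⟩
      rw [hX] at hpX
      obtain ⟨hx, hc, t, htpos, hxt, hct⟩ := hpX
      set τ : Fin ν → ℝ := fun l => Real.log (t l) with hτ
      have hlogc : ∀ j, Real.log (p.2 j) = ∑ i, (a (Fin.natAdd n j) i : ℝ) * τ i := by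
        intro j; rw [hct j]; exact hlogprod _ t htpos
      have hrecτ : ∀ l, logt p.2 l = τ l := hrec p.2 τ hlogc
      have hgp : g p.2 = p.1 := by
        funext i
        rw [hg]
        simp only [hrecτ]
        rw [← hprod, hxt i]
        refine Finset.prod_congr rfl fun l _ => ?_
        rw [hτ, Real.exp_log (htpos l)]
      refine ⟨p.2, ⟨hpK, ?_⟩, ?_⟩
      · exact ⟨τ, funext fun j => (hlogc j).symm⟩
      · show (g p.2, p.2) = p
        rw [hgp]
    · rintro ⟨c, ⟨hcK, hcW⟩, rfl⟩
      obtain ⟨τ, hMτ⟩ := hcW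
      have hcpos : ∀ j, 0 < c j := hKpos c hcK
      have hlogc : ∀ j, Real.log (c j) = ∑ i, (a (Fin.natAdd n j) i : ℝ) * τ i :=
        fun j => (congrFun hMτ j).symm
      have hrecτ : ∀ l, logt c l = τ l := hrec c τ hlogc
      refine ⟨?_, hcK⟩
      rw [hX]
      refine ⟨fun i => Real.exp_pos _, hcpos, fun l => Real.exp (τ l),
        fun l => Real.exp_pos _, ?_, ?_⟩
      · intro i
        rw [hprod, hg]
        simp only [hrecτ]
      · intro j
        rw [hprod, ← hlogc j, Real.exp_log (hcpos j)]
  -- T is compact: image of compact S under a map continuous on S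
  have hgcont : ContinuousOn (fun c => (g c, c)) S := by
    have hScond : ∀ c ∈ S, ∀ j, c j ≠ 0 := fun c hc j => (hKpos c hc.1 j).ne'
    refine ContinuousOn.prodMk ?_ continuousOn_id
    rw [continuousOn_pi]
    intro i
    refine Real.continuous_exp.comp_continuousOn ?_
    refine continuousOn_finset_sum _ fun l _ => ContinuousOn.mul continuousOn_const ?_
    refine continuousOn_finset_sum _ fun j _ => ContinuousOn.mul continuousOn_const ?_
    refine Real.continuousOn_log.comp (continuous_apply j).continuousOn ?_
    exact fun c hc => hScond c hc j
  have hTcomp : IsCompact T := by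
    rw [hTeq]
    exact hScomp.image_of_continuousOn hgcont
  -- transfer to the subtype
  rw [Topology.IsEmbedding.subtypeVal.isCompact_iff]
  have : Subtype.val '' {p : Xstar | (p : (Fin n → ℝ) × (Fin m → ℝ)).2 ∈ K} = T := by
    ext p
    constructor
    · rintro ⟨⟨p, hp⟩, hmem, rfl⟩; exact ⟨hp, hmem⟩
    · rintro ⟨hp, hmem⟩; exact ⟨⟨p, hp⟩, hmem, rfl⟩
  rw [this]
  exact hTcomp
end

section
/- Let a(1), …, a(n+m) ∈ ℤ^ν and suppose the parameter exponent vectors a(n+1), …, a(n+m) span ℚ^ν over ℚ. Let X* := {(x, c) ∈ (ℂˣ)^n × (ℂˣ)^m : ∃ t ∈ (ℂˣ)^ν with x_i = t^{a(i)} for i = 1,…,n and c_j = t^{a(n+j)} for j = 1,…,m}, and let F : X* → (ℂˣ)^m be the restriction of (x, c) ↦ c. Then there exists a natural number 𝑁 such that for every c in the image of F, the fiber F⁻¹(c) is finite with exactly 𝑁 elements; in particular the cardinality of nonempty fibers is independent of c. -/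
open Finset

private lemma upow_sum {G : Type*} [CommGroup G] {ι : Type*} (t : G) (s : Finset ι)
    (f : ι → ℤ) : t ^ (∑ i ∈ s, f i) = ∏ i ∈ s, t ^ f i := by
  induction s using Finset.cons_induction with
  | empty => simp
  | cons a s ha ih => rw [Finset.sum_cons, Finset.prod_cons, zpow_add, ih]

private lemma uprod_zpow {G : Type*} [CommGroup G] {ι : Type*} (s : Finset ι)
    (f : ι → G) (c : ℤ) : (∏ i ∈ s, f i) ^ c = ∏ i ∈ s, f i ^ c := by
  induction s using Finset.cons_induction with
  | empty => simp
  | cons a s ha ih => rw [Finset.prod_cons, Finset.prod_cons, mul_zpow, ih]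

private lemma rat_clear {m : ℕ} (q : Fin m → ℚ) :
    ∃ d : ℕ, 0 < d ∧ ∃ c : Fin m → ℤ, ∀ j, (c j : ℚ) = d * q j := by
  refine ⟨∏ j, (q j).den, Finset.prod_pos fun j _ => (q j).pos,
    fun j => (q j).num * (((∏ k, (q k).den) / (q j).den : ℕ) : ℤ), fun j => ?_⟩
  have hdvd : (q j).den ∣ ∏ k, (q k).den := Finset.dvd_prod_of_mem _ (Finset.mem_univ j)
  obtain ⟨e, he⟩ := hdvd
  have h1 : ((∏ k, (q k).den) / (q j).den : ℕ) = e := by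
    rw [he, Nat.mul_div_cancel_left _ (q j).pos]
  have hnum : ((q j).num : ℚ) = q j * (q j).den := by
    have h := Rat.num_div_den (q j)
    rwa [div_eq_iff (by exact_mod_cast (q j).pos.ne' : ((q j).den : ℚ) ≠ 0)] at h
  beta_reduce
  rw [h1, he]
  push_cast
  rw [hnum]
  ring

private lemma key_s9 {ν m : ℕ} (A : Fin m → Fin ν → ℤ) (t : Fin ν → ℂˣ)
    (ht : ∀ j, ∏ l, t l ^ A j l = 1) (c : Fin m → ℤ) (i : Fin ν) (d : ℤ)
    (hrel : ∀ l, ∑ j, c j * A j l = if l = i then d else 0) :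
    t i ^ d = 1 := by
  have h1 : ∀ l : Fin ν, t l ^ (if l = i then d else 0) = if l = i then t l ^ d else 1 := by
    intro l; split <;> simp
  calc t i ^ d = ∏ l, t l ^ (if l = i then d else 0) := by
        simp [h1, Finset.prod_ite_eq']
    _ = ∏ l, t l ^ (∑ j, c j * A j l) := by simp [hrel]
    _ = ∏ l, ∏ j, t l ^ (c j * A j l) := by
        exact Finset.prod_congr rfl fun l _ => upow_sum _ _ _
    _ = ∏ j, ∏ l, t l ^ (c j * A j l) := Finset.prod_comm
    _ = ∏ j, (∏ l, t l ^ A j l) ^ c j := by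
        refine Finset.prod_congr rfl fun j _ => ?_
        rw [uprod_zpow]
        exact Finset.prod_congr rfl fun l _ => by rw [mul_comm, zpow_mul]
    _ = 1 := by simp [ht]

private lemma mono_mul {ν : ℕ} (b : Fin ν → ℤ) (s t : Fin ν → ℂˣ) :
    ∏ l, (s l * t l) ^ b l = (∏ l, s l ^ b l) * ∏ l, t l ^ b l := by
  simp [mul_zpow, Finset.prod_mul_distrib]

private lemma mono_inv {ν : ℕ} (b : Fin ν → ℤ) (s : Fin ν → ℂˣ) :
    ∏ l, (s l)⁻¹ ^ b l = (∏ l, s l ^ b l)⁻¹ := by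
  simp [inv_zpow, Finset.prod_inv_distrib]

private lemma units_pow_finite (k : ℕ) (hk : 0 < k) :
    {z : ℂˣ | z ^ (k : ℤ) = 1}.Finite := by
  have hfin : {x : ℂ | x ^ k = 1}.Finite := by
    have hne : (Polynomial.X ^ k - Polynomial.C 1 : Polynomial ℂ) ≠ 0 := by
      intro h
      simpa [zero_pow hk.ne'] using congrArg (Polynomial.eval 0) h
    have := Polynomial.finite_setOf_isRoot hne
    convert this using 2 with x
    simp [Polynomial.IsRoot, sub_eq_zero]
  have : {z : ℂˣ | z ^ (k : ℤ) = 1} ⊆ (fun z : ℂˣ => (z : ℂ)) ⁻¹' {x : ℂ | x ^ k = 1} := by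
    intro z hz
    simp only [Set.mem_setOf_eq, zpow_natCast] at hz
    simp only [Set.mem_preimage, Set.mem_setOf_eq, ← Units.val_pow_eq_pow_val, hz, Units.val_one]
  exact (hfin.preimage (fun x _ y _ h => Units.ext h)).subset this

/-- Let `a 1, …, a (n+m) ∈ ℤ^ν` with the parameter exponent vectors
`a (n+1), …, a (n+m)` spanning `ℚ^ν` over `ℚ`.  For `c ∈ (ℂˣ)^m` in the image of the
projection `F : X* → (ℂˣ)^m`, the fiber `F⁻¹(c)` (identified with its set of
`x`-coordinates) is finite, of cardinality `N` independent of `c`. -/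
theorem stmt9 (ν n m : ℕ) (a : Fin (n + m) → Fin ν → ℤ)
    (hspan : Submodule.span ℚ
      (Set.range fun j : Fin m => fun i : Fin ν => (a (Fin.natAdd n j) i : ℚ)) = ⊤) :
    ∃ N : ℕ, ∀ c : Fin m → ℂˣ,
      (∃ t : Fin ν → ℂˣ, ∀ j, c j = ∏ l, t l ^ a (Fin.natAdd n j) l) →
      ({x : Fin n → ℂˣ | ∃ t : Fin ν → ℂˣ,
          (∀ i, x i = ∏ l, t l ^ a (Fin.castAdd m i) l) ∧
          (∀ j, c j = ∏ l, t l ^ a (Fin.natAdd n j) l)}.Finite ∧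
        Nat.card {x : Fin n → ℂˣ | ∃ t : Fin ν → ℂˣ,
          (∀ i, x i = ∏ l, t l ^ a (Fin.castAdd m i) l) ∧
          (∀ j, c j = ∏ l, t l ^ a (Fin.natAdd n j) l)} = N) := by
  classical
  set K : Set (Fin ν → ℂˣ) := {t | ∀ j, ∏ l, t l ^ a (Fin.natAdd n j) l = 1} with hKdef
  set φ : (Fin ν → ℂˣ) → (Fin n → ℂˣ) :=
    fun t i => ∏ l, t l ^ a (Fin.castAdd m i) l with hφdef
  -- each coordinate of an element of K is a root of unity
  have hroot : ∀ i : Fin ν, ∃ d : ℕ, 0 < d ∧ ∀ t ∈ K, t i ^ (d : ℤ) = 1 := by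
    intro i
    have hmem : (Pi.single i 1 : Fin ν → ℚ) ∈ Submodule.span ℚ
        (Set.range fun j : Fin m => fun l : Fin ν => (a (Fin.natAdd n j) l : ℚ)) := by
      rw [hspan]; trivial
    rw [Submodule.mem_span_range_iff_exists_fun] at hmem
    obtain ⟨q, hq⟩ := hmem
    obtain ⟨d, hd, c, hc⟩ := rat_clear q
    refine ⟨d, hd, fun t ht => ?_⟩
    refine key_s9 (fun j => a (Fin.natAdd n j)) t ht c i (d : ℤ) fun l => ?_
    have hql : ∑ j, q j * (a (Fin.natAdd n j) l : ℚ) = if l = i then 1 else 0 := by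
      have := congrFun hq l
      simpa [Pi.single_apply] using this
    have hsum : ((∑ j, c j * a (Fin.natAdd n j) l : ℤ) : ℚ)
        = d * (if l = i then (1 : ℚ) else 0) := by
      push_cast
      rw [← hql, Finset.mul_sum]
      exact Finset.sum_congr rfl fun j _ => by rw [hc j]; ring
    by_cases hli : l = i
    · rw [if_pos hli]
      rw [if_pos hli, mul_one] at hsum
      exact_mod_cast hsum
    · rw [if_neg hli]
      rw [if_neg hli, mul_zero] at hsum
      exact_mod_cast hsum
  choose d hdpos hdroot using hroot
  have hKfin : K.Finite := by
    have hsub : K ⊆ Set.pi Set.univ (fun i => {z : ℂˣ | z ^ ((d i : ℕ) : ℤ) = 1}) := by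
      intro t ht i _
      exact hdroot i t ht
    exact (Set.Finite.pi fun i => units_pow_finite (d i) (hdpos i)).subset hsub
  refine ⟨Nat.card (φ '' K), fun c hc => ?_⟩
  obtain ⟨t₀, hc⟩ := hc
  have hset : {x : Fin n → ℂˣ | ∃ t : Fin ν → ℂˣ,
          (∀ i, x i = ∏ l, t l ^ a (Fin.castAdd m i) l) ∧
          (∀ j, c j = ∏ l, t l ^ a (Fin.natAdd n j) l)}
      = (fun y => φ t₀ * y) '' (φ '' K) := by
    ext x
    simp only [Set.mem_setOf_eq, Set.mem_image]
    constructor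
    · rintro ⟨t, hxt, hct⟩
      refine ⟨φ (t₀⁻¹ * t), ⟨t₀⁻¹ * t, fun j => ?_, rfl⟩, ?_⟩
      · show ∏ l, ((t₀ l)⁻¹ * t l) ^ a (Fin.natAdd n j) l = 1
        rw [mono_mul, mono_inv, ← hc j, ← hct j, inv_mul_cancel]
      · funext i
        show (∏ l, t₀ l ^ a (Fin.castAdd m i) l) * ∏ l, ((t₀ l)⁻¹ * t l) ^ a (Fin.castAdd m i) l
            = x i
        rw [← mono_mul, hxt i]
        exact Finset.prod_congr rfl fun l _ => by rw [mul_inv_cancel_left]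
    · rintro ⟨y, ⟨s, hs, rfl⟩, rfl⟩
      refine ⟨t₀ * s, fun i => ?_, fun j => ?_⟩
      · show (∏ l, t₀ l ^ a (Fin.castAdd m i) l) * ∏ l, s l ^ a (Fin.castAdd m i) l
            = ∏ l, (t₀ l * s l) ^ a (Fin.castAdd m i) l
        exact (mono_mul _ t₀ s).symm
      · show c j = ∏ l, (t₀ l * s l) ^ a (Fin.natAdd n j) l
        rw [mono_mul, ← hc j, hs j, mul_one]
  constructor
  · rw [hset]
    exact (hKfin.image φ).image _
  · rw [hset, Nat.card_image_of_injective (mul_right_injective (φ t₀))]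
end

section
/- Let a(1), …, a(n+m) ∈ ℤ^ν and fix c ∈ (ℂˣ)^m such that there exists t₀ ∈ (ℂˣ)^ν with c_j = t₀^{a(n+j)} for all j. Then the fiber S_c := {x ∈ (ℂˣ)^n : ∃ t ∈ (ℂˣ)^ν with x_i = t^{a(i)} for i = 1,…,n and c_j = t^{a(n+j)} for j = 1,…,m} is the solution set of finitely many binomial equations with nonzero constants: there exist r ∈ ℕ, vectors γ(1), …, γ(r) ∈ ℤ^n, and constants d_1, …, d_r ∈ ℂˣ such that S_c = {x ∈ (ℂˣ)^n : ∏_{j=1}^n x_j^{γ_j(i)} = d_i for all i = 1, …, r}. -/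
open Finset

/-- ℂˣ has all n-th roots. -/
lemma exists_zpow_eq (x : ℂˣ) {w : ℤ} (hw : w ≠ 0) : ∃ z : ℂˣ, z ^ w = x := by
  obtain ⟨z0, hz0⟩ := IsAlgClosed.exists_pow_nat_eq (k := ℂ) (x : ℂ) (Nat.pos_of_ne_zero
    (by simpa using hw :  w.natAbs ≠ 0))
  have hz0ne : z0 ≠ 0 := by
    rintro rfl
    simp only [zero_pow (by simpa using hw : w.natAbs ≠ 0)] at hz0
    exact (Units.ne_zero x) hz0.symm
  set z : ℂˣ := Units.mk0 z0 hz0ne with hz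
  have hzn : z ^ (w.natAbs : ℤ) = x := by
    rw [zpow_natCast]
    ext
    push_cast [hz]
    exact hz0
  rcases Int.natAbs_eq w with h | h
  · exact ⟨z, by rw [h]; exact hzn⟩
  · exact ⟨z⁻¹, by rw [h, zpow_neg, inv_zpow, inv_inv]; exact hzn⟩

noncomputable instance : DivisibleBy (Additive ℂˣ) ℤ where
  div a w := if h : w = 0 then 0 else Additive.ofMul (Classical.choose (exists_zpow_eq a.toMul h))
  div_zero a := by simp
  div_cancel {w} a hw := by
    simp only [dif_neg hw]
    have := Classical.choose_spec (exists_zpow_eq a.toMul hw)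
    apply Additive.toMul.injective
    simpa [toMul_zsmul] using this

variable {ν k : ℕ}

/-- The exponent linear map `γ ↦ (l ↦ ∑ i, γ i * a i l)`. -/
def expMap (a : Fin k → Fin ν → ℤ) : (Fin k → ℤ) →ₗ[ℤ] (Fin ν → ℤ) where
  toFun γ := fun l => ∑ i, γ i * a i l
  map_add' γ δ := by
    funext l
    simp [add_mul, Finset.sum_add_distrib]
  map_smul' z γ := by
    funext l
    simp [Finset.mul_sum, mul_assoc]

/-- The character map `γ ↦ ∑ i, γ i • ofMul (y i)`. -/
def charMap (y : Fin k → ℂˣ) : (Fin k → ℤ) →ₗ[ℤ] Additive ℂˣ where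
  toFun γ := ∑ i, γ i • Additive.ofMul (y i)
  map_add' γ δ := by simp [add_zsmul, Finset.sum_add_distrib]
  map_smul' z γ := by
    simp only [Pi.smul_apply, smul_eq_mul, mul_zsmul, RingHom.id_apply]
    exact (map_sum (zsmulAddGroupHom z (α := Additive ℂˣ)) _ _).symm

lemma charMap_toMul (y : Fin k → ℂˣ) (γ : Fin k → ℤ) :
    (charMap y γ).toMul = ∏ i, y i ^ γ i := by
  simp [charMap, toMul_sum, toMul_zsmul]

lemma charMap_eq_zero_iff (y : Fin k → ℂˣ) (γ : Fin k → ℤ) :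
    charMap y γ = 0 ↔ ∏ i, y i ^ γ i = 1 := by
  rw [← charMap_toMul]
  exact toMul_eq_one.symm

lemma zpow_finset_sum (t : ℂˣ) (s : Finset (Fin k)) (f : Fin k → ℤ) :
    t ^ (∑ i ∈ s, f i) = ∏ i ∈ s, t ^ f i := by
  classical
  induction s using Finset.induction with
  | empty => simp
  | insert _ _ h ih => simp [Finset.sum_insert h, Finset.prod_insert h, zpow_add, ih]

/-- Forward direction: characters in the kernel vanish on the image. -/
lemma fwd_char (a : Fin k → Fin ν → ℤ) (t : Fin ν → ℂˣ) (γ : Fin k → ℤ)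
    (h : ∀ l, ∑ i, γ i * a i l = 0) :
    ∏ i, (∏ l, t l ^ a i l) ^ γ i = 1 := by
  have : ∏ i, (∏ l, t l ^ a i l) ^ γ i = ∏ l, ∏ i, t l ^ (γ i * a i l) := by
    rw [Finset.prod_comm]
    refine Finset.prod_congr rfl fun i _ => ?_
    rw [← Finset.prod_zpow]
    refine Finset.prod_congr rfl fun l _ => ?_
    rw [mul_comm, zpow_mul]
  rw [this]
  refine Finset.prod_eq_one fun l _ => ?_
  rw [← zpow_finset_sum, h l, zpow_zero]

/-- Key extension lemma: if all kernel characters vanish at `x`, then `x` is in the image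
of the monomial map. -/
lemma ext_lemma (a : Fin k → Fin ν → ℤ) (x : Fin k → ℂˣ)
    (hx : ∀ γ : Fin k → ℤ, (∀ l, ∑ i, γ i * a i l = 0) → ∏ i, x i ^ γ i = 1) :
    ∃ t : Fin ν → ℂˣ, ∀ i, x i = ∏ l, t l ^ a i l := by
  classical
  set T := expMap a with hT
  set K := LinearMap.ker T with hK
  have hker : K ≤ LinearMap.ker (charMap x) := by
    intro γ hγ
    rw [LinearMap.mem_ker, charMap_eq_zero_iff]
    refine hx γ fun l => ?_
    have := (LinearMap.mem_ker.1 hγ)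
    exact congrFun this l
  have hinj : Function.Injective (K.liftQ T le_rfl) := by
    rw [← LinearMap.ker_eq_bot, Submodule.ker_liftQ_eq_bot]
    exact le_rfl
  have hQinj : Module.Injective ℤ (Additive ℂˣ) := (Module.Baer.of_divisible _).injective
  obtain ⟨h, hh⟩ := hQinj.out (K.liftQ T le_rfl) hinj (K.liftQ (charMap x) hker)
  refine ⟨fun l => (h (Pi.single l 1)).toMul, fun i => ?_⟩
  have h1 : T (Pi.single i 1) = fun l => a i l := by
    funext l
    simp [hT, expMap, Pi.single_apply, Finset.sum_ite_eq]
  have h2 : charMap x (Pi.single i 1) = Additive.ofMul (x i) := by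
    simp [charMap, Pi.single_apply, Finset.sum_ite_eq]
  have h3 : (fun l => a i l) = ∑ l, a i l • Pi.single l (1 : ℤ) := by
    funext l'
    simp [Pi.single_apply, Finset.sum_ite_eq, mul_ite]
  have key : Additive.ofMul (x i) = h (T (Pi.single i 1)) := by
    rw [← h2]
    have := hh (K.mkQ (Pi.single i 1))
    calc charMap x (Pi.single i 1) = K.liftQ (charMap x) hker (K.mkQ (Pi.single i 1)) := by
          simp
      _ = h (K.liftQ T le_rfl (K.mkQ (Pi.single i 1))) := (hh _).symm
      _ = h (T (Pi.single i 1)) := by simp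
  rw [h1, h3, map_sum] at key
  apply Additive.ofMul.injective
  rw [key, ofMul_prod]
  refine Finset.sum_congr rfl fun l _ => ?_
  rw [map_zsmul]
  simp

/-- Let `a 1, …, a (n+m) ∈ ℤ^ν` and fix `c ∈ (ℂˣ)^m` lying in the image
of the parameter monomial map.  Then the fiber
`S_c = {x ∈ (ℂˣ)^n : ∃ t, x i = t ^ a i and c j = t ^ a (n+j)}` is the solution set of
finitely many binomial equations with nonzero constants: there are `r`, exponent vectors
`γ i ∈ ℤ^n` and constants `d i ∈ ℂˣ` with `S_c = {x : ∏ j, x j ^ γ i j = d i for all i}`. -/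
theorem stmt11 (ν n m : ℕ) (a : Fin (n + m) → Fin ν → ℤ) (c : Fin m → ℂˣ)
    (hc : ∃ t₀ : Fin ν → ℂˣ, ∀ j, c j = ∏ l, t₀ l ^ a (Fin.natAdd n j) l) :
    ∃ (r : ℕ) (γ : Fin r → Fin n → ℤ) (d : Fin r → ℂˣ),
      {x : Fin n → ℂˣ | ∃ t : Fin ν → ℂˣ,
          (∀ i, x i = ∏ l, t l ^ a (Fin.castAdd m i) l) ∧
          (∀ j, c j = ∏ l, t l ^ a (Fin.natAdd n j) l)} =
        {x : Fin n → ℂˣ | ∀ i, ∏ j, x j ^ γ i j = d i} := by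
  classical
  set K := LinearMap.ker (expMap a) with hK
  obtain ⟨s, hs⟩ := IsNoetherian.noetherian K
  set r := s.card with hr
  set Γ : Fin r → (Fin (n + m) → ℤ) := fun i => ((s.equivFin.symm i : s) : Fin (n + m) → ℤ)
    with hΓ
  have hΓmem : ∀ i, Γ i ∈ K := fun i => by
    rw [← hs]
    exact Submodule.subset_span (s.equivFin.symm i).2
  refine ⟨r, fun i j => Γ i (Fin.castAdd m j),
    fun i => (∏ j, c j ^ Γ i (Fin.natAdd n j))⁻¹, ?_⟩
  ext x
  simp only [Set.mem_setOf_eq]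
  have happ : ∀ γ : Fin (n + m) → ℤ,
      ∏ q, Fin.append x c q ^ γ q =
        (∏ j, x j ^ γ (Fin.castAdd m j)) * ∏ j, c j ^ γ (Fin.natAdd n j) := by
    intro γ
    rw [Fin.prod_univ_add]
    simp [Fin.append_left, Fin.append_right]
  constructor
  · rintro ⟨t, hx, hcc⟩ i
    have hy : ∀ q, Fin.append x c q = ∏ l, t l ^ a q l := by
      intro q
      refine Fin.addCases (fun j => ?_) (fun j => ?_) q
      · rw [Fin.append_left]; exact hx j
      · rw [Fin.append_right]; exact hcc j
    have hone : ∏ q, Fin.append x c q ^ Γ i q = 1 := by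
      have hker := LinearMap.mem_ker.1 (hΓmem i)
      calc ∏ q, Fin.append x c q ^ Γ i q = ∏ q, (∏ l, t l ^ a q l) ^ Γ i q :=
            Finset.prod_congr rfl fun q _ => by rw [hy q]
        _ = 1 := fwd_char a t (Γ i) fun l => congrFun hker l
    rw [happ] at hone
    exact eq_inv_of_mul_eq_one_left hone
  · intro hd
    have hchar : ∀ γ ∈ K, ∏ q, Fin.append x c q ^ γ q = 1 := by
      have hle : K ≤ LinearMap.ker (charMap (Fin.append x c)) := by
        rw [← hs, Submodule.span_le]
        intro γ hγ
        have : γ = Γ (s.equivFin ⟨γ, hγ⟩) := by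
          simp [hΓ]
        rw [SetLike.mem_coe, LinearMap.mem_ker, charMap_eq_zero_iff, this, happ]
        rw [hd (s.equivFin ⟨γ, hγ⟩)]
        exact inv_mul_cancel _
      intro γ hγ
      rw [← charMap_eq_zero_iff, ← LinearMap.mem_ker]
      exact hle hγ
    obtain ⟨t, ht⟩ := ext_lemma a (Fin.append x c) (fun γ hγ => hchar γ
      (LinearMap.mem_ker.2 (funext hγ)))
    refine ⟨t, fun i => ?_, fun j => ?_⟩
    · rw [← Fin.append_left x c i]; exact ht _
    · rw [← Fin.append_right x c j]; exact ht _
end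

section
/- Let β(1), …, β(r) ∈ ℤ^N be linearly independent over ℚ, and define G : U → ℂ^r on the open set U := {y ∈ ℂ^N : y_j ≠ 0 for all j} by G(y)_i = ∏_{j=1}^N y_j^{β_j(i)} (integer powers). Then G is differentiable on U and at every point y ∈ U the Fréchet derivative of G is a surjective ℂ-linear map from ℂ^N to ℂ^r; that is, G is a submersion at every point of the algebraic torus. -/
open Matrix Finset

/-- Integer matrix with `ℚ`-linearly independent rows gives a surjective `mulVec` over `ℂ`. -/
lemma stmt14_aux_surj (N r : ℕ) (β : Fin r → Fin N → ℤ)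
    (hβ : LinearIndependent ℚ fun i => fun j => (β i j : ℚ)) :
    Function.Surjective (Matrix.of fun i j => (β i j : ℂ)).mulVec := by
  classical
  set Bq : Matrix (Fin r) (Fin N) ℚ := Matrix.of fun i j => (β i j : ℚ) with hBq
  set Bc : Matrix (Fin r) (Fin N) ℂ := Matrix.of fun i j => (β i j : ℂ) with hBc
  -- `det (Bq * Bqᵀ) ≠ 0` since the rows of `Bq` are linearly independent over `ℚ`.
  have hdet : (Bq * Bqᵀ).det ≠ 0 := by
    intro h
    obtain ⟨v, hv0, hv⟩ := (Matrix.exists_mulVec_eq_zero_iff).mpr h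
    have hu : v ᵥ* Bq = 0 := by
      have h1 : (Bq * Bqᵀ) *ᵥ v = Bq *ᵥ (Bqᵀ *ᵥ v) := (Matrix.mulVec_mulVec _ _ _).symm
      have h2 : v ⬝ᵥ ((Bq * Bqᵀ) *ᵥ v) = (v ᵥ* Bq) ⬝ᵥ (v ᵥ* Bq) := by
        rw [h1, Matrix.dotProduct_mulVec, Matrix.mulVec_transpose]
      have h3 : (v ᵥ* Bq) ⬝ᵥ (v ᵥ* Bq) = 0 := by
        rw [← h2, hv, dotProduct_zero]
      exact (dotProduct_self_eq_zero).mp h3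
    apply hv0
    have := Fintype.linearIndependent_iff.mp hβ v ?_
    · exact funext this
    · ext j
      have := congr_fun hu j
      simpa [Matrix.vecMul, dotProduct, Bq] using this
  -- transfer the determinant to `ℂ`
  have hmap : (Bq * Bqᵀ).map (algebraMap ℚ ℂ) = Bc * Bcᵀ := by
    rw [Matrix.map_mul]
    congr 1
  have hdetc : (Bc * Bcᵀ).det ≠ 0 := by
    rw [← hmap]
    rw [show (Bq * Bqᵀ).map ⇑(algebraMap ℚ ℂ) = (algebraMap ℚ ℂ).mapMatrix (Bq * Bqᵀ) from rfl,
      ← RingHom.map_det]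
    simpa using hdet
  have hunit : IsUnit (Bc * Bcᵀ) :=
    (Matrix.isUnit_iff_isUnit_det _).mpr (isUnit_iff_ne_zero.mpr hdetc)
  have hsurj : Function.Surjective (Bc * Bcᵀ).mulVec :=
    Matrix.mulVec_surjective_iff_isUnit.mpr hunit
  intro w
  obtain ⟨v, hvw⟩ := hsurj w
  exact ⟨Bcᵀ *ᵥ v, by rw [Matrix.mulVec_mulVec, hvw]⟩

/-- Let `β 1, …, β r ∈ ℤ^N` be linearly independent over `ℚ` and define
`G : U → ℂ^r` on `U = {y : ∀ j, y j ≠ 0}` by `G(y) i = ∏ j, y j ^ β i j`.  Then `G` is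
differentiable on `U` and at every point of `U` its Fréchet derivative is a surjective
`ℂ`-linear map `ℂ^N → ℂ^r`; i.e. `G` is a submersion at every point of the torus. -/
theorem stmt14 (N r : ℕ) (β : Fin r → Fin N → ℤ)
    (hβ : LinearIndependent ℚ fun i => fun j => (β i j : ℚ))
    (G : (Fin N → ℂ) → (Fin r → ℂ))
    (hG : G = fun y => fun i => ∏ j, y j ^ β i j) :
    DifferentiableOn ℂ G {y | ∀ j, y j ≠ 0} ∧
    ∀ y : Fin N → ℂ, (∀ j, y j ≠ 0) →
      DifferentiableAt ℂ G y ∧ Function.Surjective (fderiv ℂ G y) := by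
  classical
  subst hG
  -- the candidate derivative at a point `y`
  have key : ∀ (y : Fin N → ℂ), (∀ j, y j ≠ 0) →
      HasFDerivAt (fun z : Fin N → ℂ => fun i => ∏ j, z j ^ β i j)
        (ContinuousLinearMap.pi fun i =>
          ∑ j, (∏ k ∈ Finset.univ.erase j, y k ^ β i k) •
            (((β i j : ℂ) * y j ^ (β i j - 1)) •
              (ContinuousLinearMap.proj j : (Fin N → ℂ) →L[ℂ] ℂ))) y := by
    intro y hy
    apply hasFDerivAt_pi.mpr
    intro i
    have := HasFDerivAt.finset_prod (u := Finset.univ)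
      (g := fun j (z : Fin N → ℂ) => z j ^ β i j)
      (g' := fun j => ((β i j : ℂ) * y j ^ (β i j - 1)) •
        (ContinuousLinearMap.proj j : (Fin N → ℂ) →L[ℂ] ℂ)) (x := y) ?_
    · exact this
    · intro j _
      have h1 : HasDerivAt (fun t : ℂ => t ^ β i j)
          ((β i j : ℂ) * y j ^ (β i j - 1)) (y j) :=
        hasDerivAt_zpow _ _ (Or.inl (hy j))
      exact h1.comp_hasFDerivAt y
        ((ContinuousLinearMap.proj j : (Fin N → ℂ) →L[ℂ] ℂ).hasFDerivAt)
  constructor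
  · intro y hy
    exact (key y hy).differentiableAt.differentiableWithinAt
  · intro y hy
    refine ⟨(key y hy).differentiableAt, ?_⟩
    rw [(key y hy).fderiv]
    -- surjectivity of the derivative
    intro w
    set Bc : Matrix (Fin r) (Fin N) ℂ := Matrix.of fun i j => (β i j : ℂ) with hBc
    set c : Fin r → ℂ := fun i => ∏ j, y j ^ β i j with hc
    have hcne : ∀ i, c i ≠ 0 := fun i =>
      Finset.prod_ne_zero_iff.mpr fun j _ => zpow_ne_zero _ (hy j)
    obtain ⟨u, hu⟩ := stmt14_aux_surj N r β hβ (fun i => w i / c i)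
    refine ⟨fun j => y j * u j, ?_⟩
    ext i
    simp only [ContinuousLinearMap.pi_apply, ContinuousLinearMap.sum_apply,
      ContinuousLinearMap.smul_apply, ContinuousLinearMap.proj_apply, smul_eq_mul]
    have hterm : ∀ j, (∏ k ∈ Finset.univ.erase j, y k ^ β i k) *
        ((β i j : ℂ) * y j ^ (β i j - 1) * (y j * u j)) = c i * ((β i j : ℂ) * u j) := by
      intro j
      have h1 : y j ^ (β i j - 1) * y j = y j ^ β i j := by
        rw [zpow_sub_one₀ (hy j), mul_assoc, inv_mul_cancel₀ (hy j), mul_one]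
      have h2 : (∏ k ∈ Finset.univ.erase j, y k ^ β i k) * y j ^ β i j = c i := by
        rw [mul_comm]
        exact Finset.mul_prod_erase Finset.univ (fun k => y k ^ β i k) (Finset.mem_univ j)
      calc (∏ k ∈ Finset.univ.erase j, y k ^ β i k) *
            ((β i j : ℂ) * y j ^ (β i j - 1) * (y j * u j))
          = ((∏ k ∈ Finset.univ.erase j, y k ^ β i k) * (y j ^ (β i j - 1) * y j)) *
            ((β i j : ℂ) * u j) := by ring
        _ = c i * ((β i j : ℂ) * u j) := by rw [h1, h2]
    calc (∑ j, (∏ k ∈ Finset.univ.erase j, y k ^ β i k) *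
          ((β i j : ℂ) * y j ^ (β i j - 1) * (y j * u j)))
        = ∑ j, c i * ((β i j : ℂ) * u j) := by
          exact Finset.sum_congr rfl fun j _ => hterm j
      _ = c i * ∑ j, (β i j : ℂ) * u j := by rw [Finset.mul_sum]
      _ = c i * (Bc.mulVec u i) := by
          simp [Bc, Matrix.mulVec, dotProduct]
      _ = c i * (w i / c i) := by rw [hBc] at *; rw [congr_fun hu i]
      _ = w i := by rw [mul_comm, div_mul_cancel₀ _ (hcne i)]
end

section
/- Write points of ℂ^{n+m} as y = (x, c) with x ∈ ℂ^n and c ∈ ℂ^m. Let β(1), …, β(r) ∈ ℤ^{n+m} and suppose that the projections of β(1), …, β(r) to the first n coordinates are linearly independent over ℚ. Define Φ : U → ℂ^r × ℂ^m on the open set U := {y ∈ ℂ^{n+m} : y_j ≠ 0 for all j} by Φ(y) = ((y^{β(1)} − 1, …, y^{β(r)} − 1), (y_{n+1}, …, y_{n+m})), where y^β = ∏_j y_j^{β_j}. Then at every point y ∈ U the Fréchet derivative of Φ is a surjective ℂ-linear map from ℂ^{n+m} to ℂ^r × ℂ^m; that is, the pair consisting of the binomial system and the coordinate projection onto the last m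 coordinates is a submersion at every point of the torus. -/
open Matrix in
lemma aux_mulVec_surj {r n : ℕ} (M : Matrix (Fin r) (Fin n) ℚ)
    (h : LinearIndependent ℚ (fun i => M i)) :
    Function.Surjective (M.map (Rat.cast : ℚ → ℂ)).mulVec := by
  have hrank : M.rank = r := by simpa using h.rank_matrix
  have hsurj : Function.Surjective M.mulVec := by
    have htop : LinearMap.range M.mulVecLin = ⊤ := by
      apply Submodule.eq_top_of_finrank_eq
      rw [← Matrix.rank, hrank, Module.finrank_fintype_fun_eq_card, Fintype.card_fin]
    exact LinearMap.range_eq_top.mp htop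
  obtain ⟨N, hN⟩ := Matrix.mulVec_surjective_iff_exists_right_inverse.mp hsurj
  refine Matrix.mulVec_surjective_iff_exists_right_inverse.mpr ⟨N.map Rat.cast, ?_⟩
  have h1 : (M * N).map (Rat.cast : ℚ → ℂ) = M.map Rat.cast * N.map Rat.cast :=
    Matrix.map_mul (f := Rat.castHom ℂ)
  refine h1.symm.trans ?_
  rw [hN]
  have : (1 : Matrix (Fin r) (Fin r) ℚ).map (Rat.cast : ℚ → ℂ) = 1 :=
    Matrix.map_one _ (by simp) (by simp)
  rw [this]

noncomputable section
variable {n m r : ℕ} (β : Fin r → Fin (n + m) → ℤ) (y : Fin (n + m) → ℂ)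

/-- the derivative of the `i`-th binomial component -/
def D (i : Fin r) : (Fin (n + m) → ℂ) →L[ℂ] ℂ :=
  ∑ j, (∏ k ∈ Finset.univ.erase j, y k ^ β i k) •
    (((β i j : ℂ) * y j ^ (β i j - 1)) • ContinuousLinearMap.proj j)

/-- total derivative candidate -/
def L : (Fin (n + m) → ℂ) →L[ℂ] (Fin r → ℂ) × (Fin m → ℂ) :=
  (ContinuousLinearMap.pi (fun i => D β y i)).prod
    (ContinuousLinearMap.pi (fun j => ContinuousLinearMap.proj (Fin.natAdd n j)))

lemma hasFDeriv (hy : ∀ j, y j ≠ 0) :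
    HasFDerivAt (fun y : Fin (n + m) → ℂ =>
      ((fun i => (∏ j, y j ^ β i j) - 1, fun j => y (Fin.natAdd n j)) :
        (Fin r → ℂ) × (Fin m → ℂ))) (L β y) y := by
  classical
  apply HasFDerivAt.prodMk
  · apply hasFDerivAt_pi.2
    intro i
    have hprod : HasFDerivAt (fun z : Fin (n + m) → ℂ => ∏ j, z j ^ β i j) (D β y i) y := by
      have h := HasFDerivAt.finset_prod (u := Finset.univ)
        (g := fun j (z : Fin (n + m) → ℂ) => z j ^ β i j)
        (g' := fun j => ((β i j : ℂ) * y j ^ (β i j - 1)) • ContinuousLinearMap.proj j)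
        (x := y)
        (fun j _ => by
          exact (hasDerivAt_zpow (β i j) (y j) (Or.inl (hy j))).comp_hasFDerivAt y
            (hasFDerivAt_apply (𝕜 := ℂ) j y))
      exact h
    exact hprod.sub_const 1
  · exact (ContinuousLinearMap.pi
      (fun j => ContinuousLinearMap.proj (R := ℂ) (φ := fun _ : Fin (n+m) => ℂ)
        (Fin.natAdd n j))).hasFDerivAt

lemma L_surj (hy : ∀ j, y j ≠ 0)
    (hβ : LinearIndependent ℚ fun i => fun j : Fin n => (β i (Fin.castAdd m j) : ℚ)) :
    Function.Surjective (L β y) := by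
  classical
  set P : Fin r → ℂ := fun i => ∏ k, y k ^ β i k with hPdef
  have hP : ∀ i, P i ≠ 0 := fun i =>
    Finset.prod_ne_zero_iff.2 fun k _ => zpow_ne_zero _ (hy k)
  set M : Matrix (Fin r) (Fin n) ℚ := Matrix.of fun i j => (β i (Fin.castAdd m j) : ℚ) with hMdef
  have hM : LinearIndependent ℚ (fun i => M i) := hβ
  have hsurj := aux_mulVec_surj M hM
  rintro ⟨a, b⟩
  set s : Fin r → ℂ := fun i =>
    ∑ j₁ : Fin m, (β i (Fin.natAdd n j₁) : ℂ) * (b j₁ / y (Fin.natAdd n j₁)) with hsdef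
  obtain ⟨w, hw⟩ := hsurj (fun i => a i / P i - s i)
  set v : Fin (n + m) → ℂ :=
    fun j => Fin.addCases (fun j₀ : Fin n => y (Fin.castAdd m j₀) * w j₀) b j with hvdef
  refine ⟨v, ?_⟩
  have h2 : (fun j => v (Fin.natAdd n j)) = b := by
    funext j; simp [hvdef]
  have h1 : ∀ i, D β y i v = a i := by
    intro i
    have key : ∀ j, (∏ k ∈ Finset.univ.erase j, y k ^ β i k) *
        (((β i j : ℂ) * y j ^ (β i j - 1)) * v j) = P i * ((β i j : ℂ) * (v j / y j)) := by
      intro j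
      have hprod : (∏ k ∈ Finset.univ.erase j, y k ^ β i k) * y j ^ β i j = P i :=
        Finset.prod_erase_mul _ _ (Finset.mem_univ j)
      rw [zpow_sub_one₀ (hy j), ← hprod]
      field_simp
    have expand : D β y i v = ∑ j, (∏ k ∈ Finset.univ.erase j, y k ^ β i k) *
        (((β i j : ℂ) * y j ^ (β i j - 1)) * v j) := by
      simp [D, ContinuousLinearMap.sum_apply, smul_eq_mul, mul_assoc]
    rw [expand]
    simp only [key]
    rw [← Finset.mul_sum, Fin.sum_univ_add]
    have hleft : ∀ j₀ : Fin n, (β i (Fin.castAdd m j₀) : ℂ) *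
        (v (Fin.castAdd m j₀) / y (Fin.castAdd m j₀)) = (β i (Fin.castAdd m j₀) : ℂ) * w j₀ := by
      intro j₀
      have hv : v (Fin.castAdd m j₀) = y (Fin.castAdd m j₀) * w j₀ := by simp [hvdef]
      rw [hv, mul_comm (y (Fin.castAdd m j₀)) (w j₀), mul_div_assoc, div_self (hy _), mul_one]
    have hright : ∀ j₁ : Fin m, (β i (Fin.natAdd n j₁) : ℂ) *
        (v (Fin.natAdd n j₁) / y (Fin.natAdd n j₁)) =
        (β i (Fin.natAdd n j₁) : ℂ) * (b j₁ / y (Fin.natAdd n j₁)) := by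
      intro j₁; simp [hvdef]
    simp only [hleft, hright]
    have hwi : ∑ j₀ : Fin n, (β i (Fin.castAdd m j₀) : ℂ) * w j₀ = a i / P i - s i := by
      have := congrFun hw i
      simpa [Matrix.mulVec, dotProduct, hMdef] using this
    rw [hwi, hsdef]
    simp only [sub_add_cancel]
    exact mul_div_cancel₀ (a i) (hP i)
  have h1' : (fun i => D β y i v) = a := funext h1
  show ((ContinuousLinearMap.pi (fun i => D β y i)).prod _) v = (a, b)
  simp only [ContinuousLinearMap.prod_apply, ContinuousLinearMap.pi_apply,
    ContinuousLinearMap.proj_apply]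
  exact Prod.ext (funext h1) h2

end


/-- Write points of `ℂ^{n+m}` as `y = (x, c)`.  Let `β 1, …, β r ∈ ℤ^{n+m}`
whose projections to the first `n` coordinates are linearly independent over `ℚ`.  Define
`Φ(y) = ((y ^ β 1 − 1, …, y ^ β r − 1), (y_{n+1}, …, y_{n+m}))` on the torus
`U = {y : ∀ j, y j ≠ 0}`.  Then at every point of `U`, `Φ` is differentiable and its
Fréchet derivative is a surjective `ℂ`-linear map `ℂ^{n+m} → ℂ^r × ℂ^m`. -/
theorem stmt15 (n m r : ℕ) (β : Fin r → Fin (n + m) → ℤ)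
    (hβ : LinearIndependent ℚ fun i => fun j : Fin n => (β i (Fin.castAdd m j) : ℚ))
    (Φ : (Fin (n + m) → ℂ) → (Fin r → ℂ) × (Fin m → ℂ))
    (hΦ : Φ = fun y => (fun i => (∏ j, y j ^ β i j) - 1, fun j => y (Fin.natAdd n j))) :
    ∀ y : Fin (n + m) → ℂ, (∀ j, y j ≠ 0) →
      DifferentiableAt ℂ Φ y ∧ Function.Surjective (fderiv ℂ Φ y) := by
  subst hΦ
  intro y hy
  have h := hasFDeriv β y hy
  exact ⟨h.differentiableAt, h.fderiv ▸ L_surj β y hy hβ⟩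
end
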